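/- Suppose T is relatively (ω,ω)-categorical. Let M be a model of T and let N₁ ≺ N₂ be models of T^P with N₁ = M^P (all inside a saturated model M̄ of T). Then the set M ∪ N₂ is complete: for every L-formula φ(x,y,z), b from M, c from N₂, if M̄ ⊨ ∃x(P(x) ∧ φ(x,b,c)) then there is e' ∈ N₂ with M̄ ⊨ φ(e',b,c). -/

import Mathlib

open FirstOrder FirstOrder.Language FirstOrder.Language.Structure

universe u v

namespace RelCatPaper

variable {L : FirstOrder.Language.{u, v}}

/-- The language is relational: no function symbols. -/
def Relational (L : FirstOrder.Language.{u, v}) : Prop := ∀ n, IsEmpty (L.Functions n)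

/-- `T` has quantifier elimination. -/
def HasQE (T : L.Theory) : Prop :=
  ∀ (n : ℕ) (φ : L.Formula (Fin n)), ∃ ψ : L.Formula (Fin n), ψ.IsQF ∧
    ∀ (M : Type (max u v)) [L.Structure M], M ⊨ T →
      ∀ v : Fin n → M, φ.Realize v ↔ ψ.Realize v

variable (p : L.Relations 1)

/-- The set of realizations of the distinguished unary predicate `p` in `M`. -/
def Pset (M : Type*) [L.Structure M] : Set M := {x | RelMap p ![x]}

/-- The `P`-part of `M` as a substructure (the language being relational). -/
def Psub (hrel : Relational L) (M : Type*) [L.Structure M] : L.Substructure M :=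
  ⟨Pset p M, fun {n} f => (hrel n).elim f⟩

/-- `T` says that `P` is infinite. -/
def PInfinite (T : L.Theory) : Prop :=
  ∀ (M : Type (max u v)) [L.Structure M], M ⊨ T → (Pset p M).Infinite

/-- A subset `A` of `M` is *complete*: any formula over `A` realized by an element of `P`
is realized by an element of `P ∩ A`. -/
def CompleteSet (M : Type*) [L.Structure M] (A : Set M) : Prop :=
  ∀ (n : ℕ) (φ : L.Formula (Fin 1 ⊕ Fin n)) (c : Fin n → M), (∀ i, c i ∈ A) →
    (∃ x : M, x ∈ Pset p M ∧ φ.Realize (Sum.elim (fun _ => x) c)) →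
    ∃ b : M, b ∈ A ∧ b ∈ Pset p M ∧ φ.Realize (Sum.elim (fun _ => b) c)

/-- `tp(a/P(M))` is isolated (by a formula over `P(M)`). -/
def IsolatedOverP (M : Type*) [L.Structure M] {m : ℕ} (a : Fin m → M) : Prop :=
  ∃ (n : ℕ) (φ : L.Formula (Fin m ⊕ Fin n)) (c : Fin n → M),
    (∀ i, c i ∈ Pset p M) ∧ φ.Realize (Sum.elim a c) ∧
    ∀ (k : ℕ) (ψ : L.Formula (Fin m ⊕ Fin k)) (d : Fin k → M), (∀ i, d i ∈ Pset p M) →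
      ψ.Realize (Sum.elim a d) →
      ∀ a' : Fin m → M, φ.Realize (Sum.elim a' c) → ψ.Realize (Sum.elim a' d)

/-- `M` is atomic over its `P`-part. -/
def AtomicOverP (M : Type*) [L.Structure M] : Prop :=
  ∀ (m : ℕ) (a : Fin m → M), IsolatedOverP p M a

/-- `T` is relatively `(ω,ω)`-categorical. -/
def RelativelyCatCC (hrel : Relational L) (T : L.Theory) : Prop :=
  ∀ (M₁ M₂ : Type (max u v)) [L.Structure M₁] [L.Structure M₂],
    M₁ ⊨ T → M₂ ⊨ T → Countable M₁ → Countable M₂ →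
    ∀ f : (Psub p hrel M₁) ≃[L] (Psub p hrel M₂),
      ∃ g : M₁ ≃[L] M₂, ∀ x : Psub p hrel M₁, g (x : M₁) = (f x : M₂)

/-- `T` is relatively `ω`-categorical (the `P`-parts are countable). -/
def RelativelyCatOmega (hrel : Relational L) (T : L.Theory) : Prop :=
  ∀ (M₁ M₂ : Type (max u v)) [L.Structure M₁] [L.Structure M₂],
    M₁ ⊨ T → M₂ ⊨ T → Countable (Psub p hrel M₁) → Countable (Psub p hrel M₂) →
    ∀ f : (Psub p hrel M₁) ≃[L] (Psub p hrel M₂),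
      ∃ g : M₁ ≃[L] M₂, ∀ x : Psub p hrel M₁, g (x : M₁) = (f x : M₂)

/-- `T` is relatively categorical. -/
def RelativelyCat (hrel : Relational L) (T : L.Theory) : Prop :=
  ∀ (M₁ M₂ : Type (max u v)) [L.Structure M₁] [L.Structure M₂],
    M₁ ⊨ T → M₂ ⊨ T →
    ∀ f : (Psub p hrel M₁) ≃[L] (Psub p hrel M₂),
      ∃ g : M₁ ≃[L] M₂, ∀ x : Psub p hrel M₁, g (x : M₁) = (f x : M₂)

/-- `TP` is the common complete theory of the `P`-parts of models of `T`. -/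
def IsPTheory (hrel : Relational L) (T TP : L.Theory) : Prop :=
  TP.IsComplete ∧
    ∀ (M : Type (max u v)) [L.Structure M], M ⊨ T → (Psub p hrel M : Type (max u v)) ⊨ TP

/-- `x` is algebraic over `A` in `M`. -/
def InAcl (M : Type*) [L.Structure M] (A : Set M) (x : M) : Prop :=
  ∃ (n : ℕ) (φ : L.Formula (Fin 1 ⊕ Fin n)) (c : Fin n → M), (∀ i, c i ∈ A) ∧
    φ.Realize (Sum.elim (fun _ => x) c) ∧
    {y : M | φ.Realize (Sum.elim (fun _ => y) c)}.Finite

/-- `M` is almost internal to `P`: `M ⊆ acl(P(M) ∪ a)` for some finite tuple `a`. -/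
def AlmostInternal (M : Type*) [L.Structure M] : Prop :=
  ∃ (m : ℕ) (a : Fin m → M), ∀ x : M, InAcl (L := L) M (Pset p M ∪ Set.range a) x

/-- `M` is `1`-coanalyzable in `P`: there is a definable relation `R ⊆ M × P^ℓ`
projecting onto `M` with all fibers over tuples from `P` finite. -/
def OneCoanalyzable (M : Type*) [L.Structure M] : Prop :=
  ∃ (ℓ n : ℕ) (φ : L.Formula ((Fin 1 ⊕ Fin ℓ) ⊕ Fin n)) (e : Fin n → M),
    (∀ x : M, ∃ c : Fin ℓ → M, (∀ i, c i ∈ Pset p M) ∧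
      φ.Realize (Sum.elim (Sum.elim (fun _ => x) c) e)) ∧
    ∀ c : Fin ℓ → M, (∀ i, c i ∈ Pset p M) →
      {x : M | φ.Realize (Sum.elim (Sum.elim (fun _ => x) c) e)}.Finite

/-- `M` is saturated: every finitely realized set of formulas in one variable over fewer
than `#M` parameters is realized. -/
def IsSaturated (M : Type w) [L.Structure M] : Prop :=
  ∀ (ι : Type w), Cardinal.mk ι < Cardinal.mk M → ∀ (c : ι → M)
    (Φ : Set (L.Formula (Fin 1 ⊕ ι))),
    (∀ Φ₀ : Finset (L.Formula (Fin 1 ⊕ ι)), ↑Φ₀ ⊆ Φ →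
      ∃ x : M, ∀ φ ∈ Φ₀, Formula.Realize φ (Sum.elim (fun _ => x) c)) →
    ∃ x : M, ∀ φ ∈ Φ, Formula.Realize φ (Sum.elim (fun _ => x) c)

/-- Types over the `P`-part are uniformly definable (stable embeddedness of `P`). -/
def StablyEmbedded (T : L.Theory) : Prop :=
  ∀ (m k : ℕ) (ψ : L.Formula (Fin m ⊕ Fin k)),
    ∃ (n : ℕ) (χ : L.Formula (Fin k ⊕ Fin n)),
      ∀ (M : Type (max u v)) [L.Structure M], M ⊨ T →
        ∀ a : Fin m → M, ∃ c : Fin n → M, (∀ i, c i ∈ Pset p M) ∧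
          ∀ b : Fin k → M, (∀ i, b i ∈ Pset p M) →
            (ψ.Realize (Sum.elim a b) ↔ χ.Realize (Sum.elim b c))


/-- `M` is `ℵ₁`-saturated (countably saturated). -/
def CountablySaturated (M : Type w) [L.Structure M] : Prop :=
  ∀ (c : ℕ → M) (Φ : Set (L.Formula (Fin 1 ⊕ ℕ))),
    (∀ Φ₀ : Finset (L.Formula (Fin 1 ⊕ ℕ)), ↑Φ₀ ⊆ Φ →
      ∃ x : M, ∀ φ ∈ Φ₀, Formula.Realize φ (Sum.elim (fun _ => x) c)) →
    ∃ x : M, ∀ φ ∈ Φ, Formula.Realize φ (Sum.elim (fun _ => x) c)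

/-- `(T,P)` is `1`-cardinal: every model of `T` has the same cardinality as its `P`-part. -/
def OneCardinal (T : L.Theory) : Prop :=
  ∀ (M : Type (max u v)) [L.Structure M], M ⊨ T → Cardinal.mk M = Cardinal.mk (Pset p M)

section Helpers

open FirstOrder FirstOrder.Language

variable {L : FirstOrder.Language.{u, v}}

noncomputable def oldIInf {α β : Type*} {n : ℕ} (s : Finset β) (f : β → L.BoundedFormula α n) :
    L.BoundedFormula α n :=
  (s.toList.map f).foldr (· ⊓ ·) ⊤

theorem realize_oldIInf {M : Type*} [L.Structure M] {α β : Type*} {n : ℕ} (s : Finset β)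
    (f : β → L.BoundedFormula α n) (v : α → M) (v' : Fin n → M) :
    (oldIInf s f).Realize v v' ↔ ∀ b ∈ s, (f b).Realize v v' := by
  simp only [oldIInf, BoundedFormula.realize_foldr_inf, List.mem_map, Finset.mem_toList,
    forall_exists_index, and_imp, forall_apply_eq_imp_iff₂]

noncomputable def oldIExs {α β γ : Type*} [Finite γ] (f : α → β ⊕ γ) (φ : L.Formula α) :
    L.Formula β :=
  Formula.iExs γ (φ.relabel f)

theorem realize_oldIExs {M : Type*} [L.Structure M] {α β γ : Type*} [Finite γ]
    {f : α → β ⊕ γ} {φ : L.Formula α} {v : β → M} :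
    (oldIExs f φ).Realize v ↔ ∃ i : γ → M, φ.Realize (fun a => Sum.elim v i (f a)) := by
  rw [oldIExs, Formula.realize_iExs]
  simp only [Formula.realize_relabel]
  rfl

/-- In a relational language, every term is a variable. -/
theorem term_eq_var (hrel : Relational L) {α : Type*} (t : L.Term α) : ∃ i, t = Term.var i := by
  cases t with
  | var i => exact ⟨i, rfl⟩
  | func f _ => exact (hrel _).elim f

/-- Realization of a bounded formula only depends on the values of its free variables. -/
theorem realize_congr_freeVar {M : Type*} [L.Structure M] {α : Type*} [DecidableEq α] {n : ℕ}
    (φ : L.BoundedFormula α n) {v v' : α → M} (h : ∀ x ∈ φ.freeVarFinset, v x = v' x)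
    (xs : Fin n → M) : φ.Realize v xs ↔ φ.Realize v' xs := by
  have h1 := BoundedFormula.realize_restrictFreeVar' (M := M)
    (subset_rfl : ↑φ.freeVarFinset ⊆ (↑φ.freeVarFinset : Set α)) (v := v) (xs := xs)
  have h2 := BoundedFormula.realize_restrictFreeVar' (M := M)
    (subset_rfl : ↑φ.freeVarFinset ⊆ (↑φ.freeVarFinset : Set α)) (v := v') (xs := xs)
  have hvv : (v ∘ (Subtype.val : (↑φ.freeVarFinset : Set α) → α)) = v' ∘ Subtype.val := by
    funext x
    exact h x.1 (by exact_mod_cast x.2)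
  rw [← h1, ← h2, hvv]

/-- Quantifier-free formulas transfer along embeddings. -/
theorem realize_of_isQF {M N : Type*} [L.Structure M] [L.Structure N] (j : M ↪[L] N)
    {α : Type*} {n : ℕ} {φ : L.BoundedFormula α n} (h : φ.IsQF) (v : α → M) (xs : Fin n → M) :
    φ.Realize (⇑j ∘ v) (⇑j ∘ xs) ↔ φ.Realize v xs := by
  induction h with
  | falsum => exact Iff.rfl
  | of_isAtomic ha =>
    cases ha with
    | equal t₁ t₂ =>
      simp only [BoundedFormula.realize_bdEqual, ← Sum.comp_elim, HomClass.realize_term]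
      exact j.injective.eq_iff
    | rel R ts =>
      simp only [BoundedFormula.realize_rel, ← Sum.comp_elim, HomClass.realize_term]
      exact j.map_rel' R _
  | imp _ _ ih1 ih2 => rw [BoundedFormula.realize_imp, BoundedFormula.realize_imp, ih1, ih2]

theorem realize_of_isQF_formula {M N : Type*} [L.Structure M] [L.Structure N] (j : M ↪[L] N)
    {α : Type*} {φ : L.Formula α} (h : φ.IsQF) (v : α → M) :
    φ.Realize (⇑j ∘ v) ↔ φ.Realize v := by
  unfold Formula.Realize
  rw [show (default : Fin 0 → N) = ⇑j ∘ (default : Fin 0 → M) from Subsingleton.elim _ _]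
  exact realize_of_isQF j h v default

/-- Countability of bounded formulas. -/
instance countable_bformula [Countable L.Symbols] {α : Type*} [Countable α] {k : ℕ} :
    Countable (L.BoundedFormula α k) := by
  have hf : Countable (Σ l, L.Functions l) :=
    Function.Injective.countable (f := fun x => (Sum.inl x : L.Symbols)) Sum.inl_injective
  have hr : Countable (Σ l, L.Relations l) :=
    Function.Injective.countable (f := fun x => (Sum.inr x : L.Symbols)) Sum.inr_injective
  have ht : Countable (Σ j, L.Term (α ⊕ Fin j)) := inferInstance
  have hbf : Countable (Σ n, L.BoundedFormula α n) :=
    Function.Injective.countable (BoundedFormula.listEncode_sigma_injective)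
  exact Function.Injective.countable
    (f := fun φ : L.BoundedFormula α k => (⟨k, φ⟩ : Σ n, L.BoundedFormula α n))
    (fun φ ψ h => by simpa using h)

/-- Countability of formulas. -/
instance countable_formula [Countable L.Symbols] {α : Type*} [Countable α] :
    Countable (L.Formula α) := by
  have hf : Countable (Σ l, L.Functions l) :=
    Function.Injective.countable (f := fun x => (Sum.inl x : L.Symbols)) Sum.inl_injective
  have hr : Countable (Σ l, L.Relations l) :=
    Function.Injective.countable (f := fun x => (Sum.inr x : L.Symbols)) Sum.inr_injective
  have ht : Countable (Σ k, L.Term (α ⊕ Fin k)) := inferInstance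
  have hbf : Countable (Σ n, L.BoundedFormula α n) :=
    Function.Injective.countable (BoundedFormula.listEncode_sigma_injective)
  exact Function.Injective.countable
    (f := fun φ : L.Formula α => (⟨0, φ⟩ : Σ n, L.BoundedFormula α n))
    (fun φ ψ h => by simpa using h)

variable (p : L.Relations 1)

theorem realize_pformula {M : Type*} [L.Structure M] {γ : Type*} (v : γ → M) (i : γ) :
    (Relations.formula p (fun _ => Term.var i)).Realize v ↔ v i ∈ Pset p M := by
  simp only [Formula.realize_rel, Term.realize_var]
  unfold Pset
  rw [Set.mem_setOf_eq]
  have : ![v i] = (fun _ : Fin 1 => v i) := funext (Matrix.cons_val_fin_one (v i) _)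
  rw [this]

end Helpers
section Henkin

open FirstOrder FirstOrder.Language

attribute [local instance] Classical.propDecidable

variable {L : FirstOrder.Language.{u, v}} (p : L.Relations 1) (hrel : Relational L)
variable {N : Type*} [L.Structure N]

/-- Shorthands for atomic formulas over `ℕ`-indexed variables. -/
noncomputable def eqF (i j : ℕ) : L.Formula ℕ := Term.equal (Term.var i) (Term.var j)

noncomputable def pF (i : ℕ) : L.Formula ℕ := Relations.formula p (fun _ => Term.var i)

noncomputable def rF {l : ℕ} (R : L.Relations l) (w : Fin l → ℕ) : L.Formula ℕ :=
  Relations.formula R (fun i => Term.var (w i))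

@[simp] theorem realize_eqF {M : Type*} [L.Structure M] (v : ℕ → M) (i j : ℕ) :
    (eqF (L := L) i j).Realize v ↔ v i = v j := by
  rw [eqF, Formula.realize_equal, Term.realize_var, Term.realize_var]

@[simp] theorem realize_rF {M : Type*} [L.Structure M] (v : ℕ → M) {l : ℕ}
    (R : L.Relations l) (w : Fin l → ℕ) :
    (rF R w).Realize v ↔ RelMap R (v ∘ w) := by
  rw [rF, Formula.realize_rel]
  simp only [Term.realize_var]
  exact Iff.rfl

theorem realize_pF {M : Type*} [L.Structure M] (v : ℕ → M) (i : ℕ) :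
    (pF p i).Realize v ↔ v i ∈ Pset p M :=
  realize_pformula p v i

/-- Closing off a bounded formula by substituting variables for the bound de Bruijn slots. -/
noncomputable def cf {n : ℕ} (φ : L.BoundedFormula ℕ n) (σ : Fin n → ℕ) : L.Formula ℕ :=
  Formula.relabel (Sum.elim id σ) φ.toFormula

theorem realize_cf {M : Type*} [L.Structure M] {n : ℕ} (φ : L.BoundedFormula ℕ n)
    (σ : Fin n → ℕ) (v : ℕ → M) :
    (cf φ σ).Realize v ↔ φ.Realize v (v ∘ σ) := by
  rw [cf, Formula.realize_relabel, BoundedFormula.realize_toFormula]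
  exact Iff.rfl

variable (a : ℕ → N)

/-- A valuation is pinned if it sends even variables to the enumerated `P`-elements. -/
def pin (v : ℕ → N) : Prop := ∀ i, v (2 * i) = a i

/-- A finite set of formulas is realizable by a pinned valuation. -/
def Rlz (s : Finset (L.Formula ℕ)) : Prop := ∃ v : ℕ → N, pin a v ∧ ∀ φ ∈ s, φ.Realize v

theorem pin_exists : ∃ v : ℕ → N, pin a v :=
  ⟨fun i => a (i / 2), fun i => by simp [Nat.mul_div_cancel_left i (by norm_num : 0 < 2)]⟩

theorem Rlz_empty : Rlz a (∅ : Finset (L.Formula ℕ)) := by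
  obtain ⟨v, hv⟩ := pin_exists a
  exact ⟨v, hv, by simp⟩

theorem Rlz_subset {s t : Finset (L.Formula ℕ)} (h : s ⊆ t) (ht : Rlz a t) : Rlz a s := by
  obtain ⟨v, hv, hr⟩ := ht
  exact ⟨v, hv, fun φ hφ => hr φ (h hφ)⟩

/-- A fresh (odd, unused) variable. -/
noncomputable def bnd (s : Finset (L.Formula ℕ)) (t : Finset ℕ) : ℕ :=
  (s.sup fun φ => φ.freeVarFinset.sup id) ⊔ t.sup id

noncomputable def fresh (s : Finset (L.Formula ℕ)) (t : Finset ℕ) : ℕ :=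
  2 * (bnd s t + 1) + 1

theorem lt_fresh_of_freeVar {s : Finset (L.Formula ℕ)} {t : Finset ℕ} {φ : L.Formula ℕ}
    {x : ℕ} (hφ : φ ∈ s) (hx : x ∈ φ.freeVarFinset) : x < fresh s t := by
  have h1 : x ≤ φ.freeVarFinset.sup id := Finset.le_sup (f := id) hx
  have h2 : φ.freeVarFinset.sup id ≤ s.sup fun φ => φ.freeVarFinset.sup id :=
    Finset.le_sup (f := fun φ => φ.freeVarFinset.sup id) hφ
  have h3 : s.sup (fun φ => φ.freeVarFinset.sup id) ≤ bnd s t := le_sup_left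
  unfold fresh
  omega

theorem lt_fresh_of_mem {s : Finset (L.Formula ℕ)} {t : Finset ℕ} {x : ℕ} (hx : x ∈ t) :
    x < fresh s t := by
  have h1 : x ≤ t.sup id := Finset.le_sup (f := id) hx
  have h3 : t.sup id ≤ bnd s t := le_sup_right
  unfold fresh
  omega

theorem fresh_ne_even (s : Finset (L.Formula ℕ)) (t : Finset ℕ) (i : ℕ) :
    fresh s t ≠ 2 * i := by
  unfold fresh
  omega

/-- The type of requirements for the generic construction. -/
abbrev TaskT (L : FirstOrder.Language.{u, v}) (m : ℕ) : Type (max u v) :=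
  (L.Formula ℕ) ⊕ ((Σ n : ℕ, L.BoundedFormula ℕ (n + 1) × (Fin n → ℕ)) ⊕ (ℕ ⊕ (Fin m → ℕ)))

variable {m : ℕ} (b : Fin m → N)

/-- One step of the generic construction. -/
noncomputable def step : TaskT L m → Finset (L.Formula ℕ) → Finset (L.Formula ℕ)
  | Sum.inl φ, s => if Rlz a (insert φ s) then insert φ s else insert φ.not s
  | Sum.inr (Sum.inl ⟨_, ψ, σ⟩), s =>
      if Rlz a (insert (cf ψ.all σ) s) then insert (cf ψ.all σ) s
      else insert (cf ψ (Fin.snoc σ (fresh s (ψ.freeVarFinset ∪ Finset.image σ Finset.univ)))).not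
        (insert (cf ψ.all σ).not s)
  | Sum.inr (Sum.inr (Sum.inl i)), s =>
      if h : ∃ j, Rlz a (insert (eqF i (2 * j)) s) then
        insert (eqF i (2 * Classical.choose h)) s
      else insert (pF p i).not s
  | Sum.inr (Sum.inr (Sum.inr c)), s =>
      if h : ∃ q : Σ k, L.Formula (Fin m ⊕ Fin k) × (Fin k → ℕ),
          q.2.1.Realize (Sum.elim b (a ∘ q.2.2)) ∧
          Rlz a (insert ((q.2.1.relabel (Sum.elim c (fun j => 2 * q.2.2 j))).not) s) then
        insert (((Classical.choose h).2.1.relabel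
          (Sum.elim c (fun j => 2 * (Classical.choose h).2.2 j))).not) s
      else s

theorem subset_step (t : TaskT L m) (s : Finset (L.Formula ℕ)) : s ⊆ step p a b t s := by
  rcases t with φ | ⟨n, ψ, σ⟩ | i | c <;> simp only [step] <;> split <;>
    first
      | exact Finset.subset_insert _ _
      | exact (Finset.subset_insert _ _).trans (Finset.subset_insert _ _)
      | exact subset_rfl

theorem Rlz_step (hsur : ∀ x, x ∈ Pset p N → ∃ j, a j = x)
    (t : TaskT L m) (s : Finset (L.Formula ℕ)) (hs : Rlz a s) :
    Rlz a (step p a b t s) := by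
  rcases t with φ | ⟨n, ψ, σ⟩ | i | c
  · simp only [step]
    split
    · assumption
    · obtain ⟨v, hv, hr⟩ := hs
      refine ⟨v, hv, fun χ hχ => ?_⟩
      rcases Finset.mem_insert.1 hχ with rfl | hχ
      · rw [Formula.realize_not]
        intro hreal
        exact ‹¬Rlz a (insert φ s)› ⟨v, hv, fun χ' hχ' => by
          rcases Finset.mem_insert.1 hχ' with rfl | hχ'
          · exact hreal
          · exact hr χ' hχ'⟩
      · exact hr χ hχ
  · simp only [step]
    split
    · assumption
    · rename_i hnr
      obtain ⟨v, hv, hr⟩ := hs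
      set t0 := ψ.freeVarFinset ∪ Finset.image σ Finset.univ with ht0
      set c0 := fresh s t0 with hc0
      have hnΦ : ¬ (cf ψ.all σ).Realize v := fun hreal =>
        hnr ⟨v, hv, fun χ' hχ' => by
          rcases Finset.mem_insert.1 hχ' with rfl | hχ'
          · exact hreal
          · exact hr χ' hχ'⟩
      rw [realize_cf, BoundedFormula.realize_all] at hnΦ
      push_neg at hnΦ
      obtain ⟨x, hx⟩ := hnΦ
      set v' : ℕ → N := fun i => if i = c0 then x else v i with hv'
      have hpin' : pin a v' := fun i => by
        rw [hv']
        simp only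
        rw [if_neg (fun h => fresh_ne_even s t0 i h.symm)]
        exact hv i
      have hvagree : ∀ (χ : L.Formula ℕ), χ ∈ s → (χ.Realize v' ↔ χ.Realize v) := by
        intro χ hχ
        have : ∀ y ∈ χ.freeVarFinset, v' y = v y := by
          intro y hy
          rw [hv']
          simp only
          rw [if_neg (Nat.ne_of_lt (lt_fresh_of_freeVar hχ hy))]
        exact realize_congr_freeVar χ this _
      have hψagree : ∀ y ∈ ψ.freeVarFinset, v' y = v y := by
        intro y hy
        rw [hv']
        simp only
        rw [if_neg (Nat.ne_of_lt (lt_fresh_of_mem (Finset.mem_union_left _ hy)))]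
      have hσagree : ∀ j, v' (σ j) = v (σ j) := by
        intro j
        rw [hv']
        simp only
        rw [if_neg (Nat.ne_of_lt (lt_fresh_of_mem
          (Finset.mem_union_right _ (Finset.mem_image_of_mem σ (Finset.mem_univ j)))))]
      refine ⟨v', hpin', fun χ hχ => ?_⟩
      rcases Finset.mem_insert.1 hχ with rfl | hχ
      · -- ¬ cf ψ (snoc σ c0)
        rw [Formula.realize_not, realize_cf]
        have hcomp : v' ∘ Fin.snoc σ c0 = Fin.snoc (v ∘ σ) x := by
          funext j
          refine Fin.lastCases ?_ ?_ j
          · simp only [Function.comp_apply, Fin.snoc_last]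
            rw [hv']
            simp
          · intro j'
            simp only [Function.comp_apply, Fin.snoc_castSucc]
            exact hσagree j'
        rw [hcomp]
        rw [realize_congr_freeVar ψ hψagree]
        exact hx
      rcases Finset.mem_insert.1 hχ with rfl | hχ
      · -- (cf ψ.all σ).not
        rw [Formula.realize_not, realize_cf, BoundedFormula.realize_all]
        push_neg
        refine ⟨x, ?_⟩
        have hvs : v' ∘ σ = v ∘ σ := funext hσagree
        rw [hvs, realize_congr_freeVar ψ hψagree]
        exact hx
      · exact (hvagree χ hχ).2 (hr χ hχ)
  · simp only [step]
    split
    · rename_i h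
      exact Classical.choose_spec h
    · rename_i h
      obtain ⟨v, hv, hr⟩ := hs
      refine ⟨v, hv, fun χ hχ => ?_⟩
      rcases Finset.mem_insert.1 hχ with rfl | hχ
      · rw [Formula.realize_not, realize_pF]
        intro hmem
        obtain ⟨j, hj⟩ := hsur _ hmem
        refine h ⟨j, v, hv, fun χ' hχ' => ?_⟩
        rcases Finset.mem_insert.1 hχ' with rfl | hχ'
        · rw [realize_eqF, hv j]
          exact hj.symm
        · exact hr χ' hχ'
      · exact hr χ hχ
  · simp only [step]
    split
    · rename_i h
      exact (Classical.choose_spec h).2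
    · exact hs

variable (τ : ℕ → TaskT L m)

/-- The chain of finite conditions. -/
noncomputable def seqS : ℕ → Finset (L.Formula ℕ)
  | 0 => ∅
  | n + 1 => step p a b (τ n) (seqS n)

/-- The generic complete theory. -/
def Theta : Set (L.Formula ℕ) := {φ | ∃ n, φ ∈ seqS p a b τ n}

theorem Rlz_seqS (hsur : ∀ x, x ∈ Pset p N → ∃ j, a j = x) (n : ℕ) :
    Rlz a (seqS p a b τ n) := by
  induction n with
  | zero => exact Rlz_empty a
  | succ n ih => exact Rlz_step p a b hsur (τ n) _ ih

theorem seqS_mono {n n' : ℕ} (h : n ≤ n') : seqS p a b τ n ⊆ seqS p a b τ n' := by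
  induction h with
  | refl => exact subset_rfl
  | step h ih => exact ih.trans (subset_step p a b _ _)

theorem mem_seqS_of_finset {s : Finset (L.Formula ℕ)} (h : ↑s ⊆ Theta p a b τ) :
    ∃ n, s ⊆ seqS p a b τ n := by
  classical
  induction s using Finset.induction with
  | empty => exact ⟨0, by simp⟩
  | insert _ _ hx ih =>
    rename_i φ s'
    obtain ⟨n1, hn1⟩ := ih (fun ψ hψ => h (by simp [hψ]))
    obtain ⟨n2, hn2⟩ := h (by simp : φ ∈ (↑(insert φ s') : Set (L.Formula ℕ)))
    refine ⟨max n1 n2, Finset.insert_subset ?_ ?_⟩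
    · exact seqS_mono p a b τ (le_max_right n1 n2) hn2
    · exact hn1.trans (seqS_mono p a b τ (le_max_left n1 n2))

theorem Rlz_of_sub_Theta (hsur : ∀ x, x ∈ Pset p N → ∃ j, a j = x)
    {s : Finset (L.Formula ℕ)} (h : ↑s ⊆ Theta p a b τ) : Rlz a s := by
  obtain ⟨n, hn⟩ := mem_seqS_of_finset p a b τ h
  exact Rlz_subset a hn (Rlz_seqS p a b τ hsur n)

variable (hτ : Function.Surjective τ)
variable (hsur : ∀ x, x ∈ Pset p N → ∃ j, a j = x)

include hτ in
theorem theta_complete (φ : L.Formula ℕ) : φ ∈ Theta p a b τ ∨ φ.not ∈ Theta p a b τ := by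
  obtain ⟨n, hn⟩ := hτ (Sum.inl φ)
  have : seqS p a b τ (n + 1) = step p a b (Sum.inl φ) (seqS p a b τ n) := by
    rw [seqS, hn]
  by_cases hr : Rlz a (insert φ (seqS p a b τ n))
  · left
    refine ⟨n + 1, ?_⟩
    rw [this]
    simp only [step, if_pos hr]
    exact Finset.mem_insert_self _ _
  · right
    refine ⟨n + 1, ?_⟩
    rw [this]
    simp only [step, if_neg hr]
    exact Finset.mem_insert_self _ _

include hτ hsur in
/-- The main deduction rule for `Theta`. -/
theorem theta_mp_fin {s : Finset (L.Formula ℕ)} (hs : ↑s ⊆ Theta p a b τ)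
    {χ : L.Formula ℕ}
    (h : ∀ v : ℕ → N, pin a v → (∀ φ ∈ s, φ.Realize v) → χ.Realize v) :
    χ ∈ Theta p a b τ := by
  rcases theta_complete p a b τ hτ χ with hc | hc
  · exact hc
  · exfalso
    have hsub : ↑(insert χ.not s) ⊆ Theta p a b τ := by
      intro ψ hψ
      rcases Finset.mem_coe.1 hψ |> Finset.mem_insert.1 with rfl | hψ'
      · exact hc
      · exact hs hψ'
    obtain ⟨v, hv, hr⟩ := Rlz_of_sub_Theta p a b τ hsur hsub
    have h1 : χ.Realize v := h v hv (fun φ hφ => hr φ (Finset.mem_insert_of_mem hφ))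
    have h2 : (Formula.not χ).Realize v := hr _ (Finset.mem_insert_self _ _)
    rw [Formula.realize_not] at h2
    exact h2 h1

include hτ hsur in
theorem theta_taut {χ : L.Formula ℕ} (h : ∀ v : ℕ → N, pin a v → χ.Realize v) :
    χ ∈ Theta p a b τ :=
  theta_mp_fin p a b τ hτ hsur (s := ∅) (by simp) (fun v hv _ => h v hv)

include hτ hsur in
theorem theta_mp {φ χ : L.Formula ℕ} (hφ : φ ∈ Theta p a b τ)
    (h : ∀ v : ℕ → N, pin a v → φ.Realize v → χ.Realize v) : χ ∈ Theta p a b τ := by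
  refine theta_mp_fin p a b τ hτ hsur (s := {φ}) (by simpa using hφ) ?_
  intro v hv hr
  exact h v hv (hr φ (by simp))

include hτ hsur in
theorem theta_mp₂ {φ₁ φ₂ χ : L.Formula ℕ} (h1 : φ₁ ∈ Theta p a b τ) (h2 : φ₂ ∈ Theta p a b τ)
    (h : ∀ v : ℕ → N, pin a v → φ₁.Realize v → φ₂.Realize v → χ.Realize v) :
    χ ∈ Theta p a b τ := by
  refine theta_mp_fin p a b τ hτ hsur (s := {φ₁, φ₂}) ?_ ?_
  · intro ψ hψ
    rcases Finset.mem_coe.1 hψ |> Finset.mem_insert.1 with rfl | hψ'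
    · exact h1
    · rw [Finset.mem_singleton] at hψ'
      subst hψ'
      exact h2
  · intro v hv hr
    exact h v hv (hr φ₁ (by simp)) (hr φ₂ (by simp))

include hτ hsur in
theorem theta_iff {χ : L.Formula ℕ} {P : Prop}
    (h : ∀ v : ℕ → N, pin a v → (χ.Realize v ↔ P)) : χ ∈ Theta p a b τ ↔ P := by
  constructor
  · intro hχ
    obtain ⟨v, hv, hr⟩ := Rlz_of_sub_Theta p a b τ hsur (s := {χ}) (by simpa using hχ)
    exact (h v hv).1 (hr χ (by simp))
  · intro hP
    exact theta_taut p a b τ hτ hsur (fun v hv => (h v hv).2 hP)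

include hτ hsur in
theorem theta_equiv {χ₁ χ₂ : L.Formula ℕ}
    (h : ∀ v : ℕ → N, pin a v → (χ₁.Realize v ↔ χ₂.Realize v)) :
    χ₁ ∈ Theta p a b τ ↔ χ₂ ∈ Theta p a b τ :=
  ⟨fun hm => theta_mp p a b τ hτ hsur hm (fun v hv => (h v hv).1),
   fun hm => theta_mp p a b τ hτ hsur hm (fun v hv => (h v hv).2)⟩

include hτ hsur in
theorem theta_not_both {χ : L.Formula ℕ} (h1 : χ ∈ Theta p a b τ)
    (h2 : χ.not ∈ Theta p a b τ) : False := by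
  obtain ⟨v, hv, hr⟩ := Rlz_of_sub_Theta p a b τ hsur (s := {χ, χ.not}) (by
    intro ψ hψ
    rcases Finset.mem_coe.1 hψ |> Finset.mem_insert.1 with rfl | hψ'
    · exact h1
    · rw [Finset.mem_singleton] at hψ'
      subst hψ'
      exact h2)
  have := hr χ.not (by simp)
  rw [Formula.realize_not] at this
  exact this (hr χ (by simp))

include hτ in
/-- Henkin property for the universal quantifier. -/
theorem theta_henkin {n : ℕ} (ψ : L.BoundedFormula ℕ (n + 1)) (σ : Fin n → ℕ) :
    cf ψ.all σ ∈ Theta p a b τ ∨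
      ∃ c, (cf ψ (Fin.snoc σ c)).not ∈ Theta p a b τ := by
  obtain ⟨n0, hn0⟩ := hτ (Sum.inr (Sum.inl ⟨n, ψ, σ⟩))
  have hS : seqS p a b τ (n0 + 1) = step p a b (Sum.inr (Sum.inl ⟨n, ψ, σ⟩)) (seqS p a b τ n0) := by
    rw [seqS, hn0]
  by_cases hr : Rlz a (insert (cf ψ.all σ) (seqS p a b τ n0))
  · left
    refine ⟨n0 + 1, ?_⟩
    rw [hS]
    simp only [step, if_pos hr]
    exact Finset.mem_insert_self _ _
  · right
    refine ⟨fresh (seqS p a b τ n0) (ψ.freeVarFinset ∪ Finset.image σ Finset.univ), n0 + 1, ?_⟩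
    rw [hS]
    simp only [step, if_neg hr]
    exact Finset.mem_insert_self _ _

include hτ in
/-- The collapse property: every variable is either non-`P` or equal to a parameter variable. -/
theorem theta_collapse (i : ℕ) :
    (∃ j, eqF i (2 * j) ∈ Theta p a b τ) ∨ (pF p i).not ∈ Theta p a b τ := by
  obtain ⟨n0, hn0⟩ := hτ (Sum.inr (Sum.inr (Sum.inl i)))
  have hS : seqS p a b τ (n0 + 1) = step p a b (Sum.inr (Sum.inr (Sum.inl i))) (seqS p a b τ n0) := by
    rw [seqS, hn0]
  by_cases hr : ∃ j, Rlz a (insert (eqF i (2 * j)) (seqS p a b τ n0))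
  · left
    refine ⟨Classical.choose hr, n0 + 1, ?_⟩
    rw [hS]
    simp only [step, dif_pos hr]
    exact Finset.mem_insert_self _ _
  · right
    refine ⟨n0 + 1, ?_⟩
    rw [hS]
    simp only [step, dif_neg hr]
    exact Finset.mem_insert_self _ _

/-- The setoid of variables identified by `Theta`. -/
noncomputable def ksetoid : Setoid (ULift.{max u v} ℕ) where
  r x y := eqF (L := L) x.down y.down ∈ Theta p a b τ
  iseqv := by
    refine ⟨fun x => ?_, fun {x y} h => ?_, fun {x y z} h1 h2 => ?_⟩
    · exact theta_taut p a b τ hτ hsur (fun v _ => by rw [realize_eqF])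
    · exact theta_mp p a b τ hτ hsur h (fun v _ h' => by
        rw [realize_eqF] at h' ⊢
        exact h'.symm)
    · exact theta_mp₂ p a b τ hτ hsur h1 h2 (fun v _ h1' h2' => by
        rw [realize_eqF] at h1' h2' ⊢
        exact h1'.trans h2')

/-- The canonical countable model built from `Theta`. -/
def KK : Type (max u v) := Quotient (ksetoid p a b τ hτ hsur)

/-- The class of a variable. -/
noncomputable def cls (i : ℕ) : KK p a b τ hτ hsur :=
  Quotient.mk (ksetoid p a b τ hτ hsur) ⟨i⟩

theorem cls_surjective : Function.Surjective (cls p a b τ hτ hsur) := by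
  intro x
  obtain ⟨⟨i⟩, rfl⟩ := Quotient.exists_rep x
  exact ⟨i, rfl⟩

theorem cls_eq {i j : ℕ} :
    cls p a b τ hτ hsur i = cls p a b τ hτ hsur j ↔ eqF (L := L) i j ∈ Theta p a b τ :=
  ⟨fun h => Quotient.exact h, fun h => Quotient.sound h⟩

noncomputable instance kstructure : L.Structure (KK p a b τ hτ hsur) where
  funMap := fun {n} _ _ => cls p a b τ hτ hsur 0
  RelMap := fun {l} R xs => ∃ w : Fin l → ℕ,
    (∀ i, cls p a b τ hτ hsur (w i) = xs i) ∧ rF R w ∈ Theta p a b τ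

theorem krel_iff {l : ℕ} (R : L.Relations l) (w : Fin l → ℕ) :
    RelMap (M := KK p a b τ hτ hsur) R (fun i => cls p a b τ hτ hsur (w i)) ↔
      rF R w ∈ Theta p a b τ := by
  constructor
  · rintro ⟨w', hw', hmem⟩
    classical
    refine theta_mp_fin p a b τ hτ hsur
      (s := insert (rF R w') (Finset.image (fun i => eqF (w' i) (w i)) Finset.univ)) ?_ ?_
    · intro ψ hψ
      rcases Finset.mem_coe.1 hψ |> Finset.mem_insert.1 with rfl | hψ'
      · exact hmem
      · obtain ⟨i, _, rfl⟩ := Finset.mem_image.1 hψ'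
        exact cls_eq p a b τ hτ hsur |>.1 (hw' i)
    · intro v hv hr
      have h1 : (rF R w').Realize v := hr _ (Finset.mem_insert_self _ _)
      rw [realize_rF] at h1
      have h2 : v ∘ w' = v ∘ w := by
        funext i
        have := hr _ (Finset.mem_insert_of_mem
          (Finset.mem_image_of_mem (fun i => eqF (w' i) (w i)) (Finset.mem_univ i)))
        rw [realize_eqF] at this
        exact this
      rw [realize_rF]
      rw [h2] at h1
      exact h1
  · intro hmem
    exact ⟨w, fun i => rfl, hmem⟩

theorem elim_cls {n : ℕ} (σ : Fin n → ℕ) (w : ℕ ⊕ Fin n) :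
    Sum.elim (cls p a b τ hτ hsur) (cls p a b τ hτ hsur ∘ σ) w
      = cls p a b τ hτ hsur (Sum.elim id σ w) := by
  cases w <;> rfl

theorem elim_var {M : Type*} [L.Structure M] {n : ℕ} (v : ℕ → M) (σ : Fin n → ℕ)
    (w : ℕ ⊕ Fin n) : Sum.elim v (v ∘ σ) w = v (Sum.elim id σ w) := by
  cases w <;> rfl

include hrel in
/-- The Truth Lemma for the canonical model. -/
theorem sat : ∀ {n : ℕ} (φ : L.BoundedFormula ℕ n) (σ : Fin n → ℕ),
    φ.Realize (cls p a b τ hτ hsur) (cls p a b τ hτ hsur ∘ σ) ↔ cf φ σ ∈ Theta p a b τ := by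
  intro n φ
  induction φ with
  | falsum =>
    intro σ
    refine iff_of_false (fun h => h) ?_
    intro hmem
    obtain ⟨v, hv, hr⟩ := Rlz_of_sub_Theta p a b τ hsur (s := {cf BoundedFormula.falsum σ})
      (by simpa using hmem)
    have := hr _ (Finset.mem_singleton_self _)
    rw [realize_cf] at this
    exact this
  | equal t₁ t₂ =>
    intro σ
    obtain ⟨w₁, rfl⟩ := term_eq_var hrel t₁
    obtain ⟨w₂, rfl⟩ := term_eq_var hrel t₂
    have lhs : (BoundedFormula.equal (L := L) (Term.var w₁) (Term.var w₂)).Realize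
        (cls p a b τ hτ hsur) (cls p a b τ hτ hsur ∘ σ) ↔
        cls p a b τ hτ hsur (Sum.elim id σ w₁) = cls p a b τ hτ hsur (Sum.elim id σ w₂) := by
      rw [show (BoundedFormula.equal (L := L) (Term.var w₁) (Term.var w₂))
        = Term.bdEqual (Term.var w₁) (Term.var w₂) from rfl, BoundedFormula.realize_bdEqual]
      simp only [Term.realize_var, elim_cls]
    rw [lhs, cls_eq]
    refine theta_equiv p a b τ hτ hsur ?_
    intro v hv
    rw [realize_eqF, realize_cf]
    rw [show (BoundedFormula.equal (L := L) (Term.var w₁) (Term.var w₂))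
      = Term.bdEqual (Term.var w₁) (Term.var w₂) from rfl, BoundedFormula.realize_bdEqual]
    simp only [Term.realize_var]
    rw [elim_var (L := L) v σ w₁, elim_var (L := L) v σ w₂]
  | rel R ts =>
    intro σ
    have hw : ∀ i, ∃ j, ts i = Term.var j := fun i => term_eq_var hrel (ts i)
    choose w hw using hw
    have lhs : (BoundedFormula.rel R ts).Realize
        (cls p a b τ hτ hsur) (cls p a b τ hτ hsur ∘ σ) ↔
        RelMap (M := KK p a b τ hτ hsur) R
          (fun i => cls p a b τ hτ hsur (Sum.elim id σ (w i))) := by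
      rw [show (BoundedFormula.rel R ts)
        = Relations.boundedFormula R ts from rfl, BoundedFormula.realize_rel]
      simp only [hw, Term.realize_var, elim_cls]
    rw [lhs, krel_iff]
    refine theta_equiv p a b τ hτ hsur ?_
    intro v hv
    rw [realize_rF, realize_cf]
    rw [show (BoundedFormula.rel R ts)
      = Relations.boundedFormula R ts from rfl, BoundedFormula.realize_rel]
    simp only [hw, Term.realize_var]
    exact iff_of_eq (congrArg (RelMap R) (funext fun i => (elim_var (L := L) v σ (w i)).symm))
  | imp φ₁ φ₂ ih₁ ih₂ =>
    intro σ
    rw [BoundedFormula.realize_imp, ih₁ σ, ih₂ σ]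
    constructor
    · intro h
      rcases theta_complete p a b τ hτ (cf φ₁ σ) with h1 | h1
      · refine theta_mp p a b τ hτ hsur (h h1) ?_
        intro v hv h2
        rw [realize_cf] at h2
        rw [realize_cf, BoundedFormula.realize_imp]
        exact fun _ => h2
      · refine theta_mp p a b τ hτ hsur h1 ?_
        intro v hv h2
        rw [Formula.realize_not, realize_cf] at h2
        rw [realize_cf, BoundedFormula.realize_imp]
        exact fun h3 => absurd h3 h2
    · intro h h1
      refine theta_mp₂ p a b τ hτ hsur h h1 ?_
      intro v hv h2 h3
      rw [realize_cf, BoundedFormula.realize_imp] at h2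
      rw [realize_cf] at h3 ⊢
      exact h2 h3
  | all ψ ih =>
    intro σ
    rw [BoundedFormula.realize_all]
    have lhs : (∀ x : KK p a b τ hτ hsur,
        ψ.Realize (cls p a b τ hτ hsur) (Fin.snoc (cls p a b τ hτ hsur ∘ σ) x)) ↔
        ∀ c : ℕ, cf ψ (Fin.snoc σ c) ∈ Theta p a b τ := by
      constructor
      · intro h c
        have := h (cls p a b τ hτ hsur c)
        rw [← Fin.comp_snoc] at this
        exact (ih (Fin.snoc σ c)).1 this
      · intro h x
        obtain ⟨c, rfl⟩ := cls_surjective p a b τ hτ hsur x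
        rw [← Fin.comp_snoc]
        exact (ih (Fin.snoc σ c)).2 (h c)
    rw [lhs]
    constructor
    · intro h
      rcases theta_henkin p a b τ hτ ψ σ with h1 | ⟨c, h1⟩
      · exact h1
      · exact absurd (h c) (fun hc => theta_not_both p a b τ hτ hsur hc h1)
    · intro h c
      refine theta_mp p a b τ hτ hsur h ?_
      intro v hv h2
      rw [realize_cf, BoundedFormula.realize_all] at h2
      rw [realize_cf, Fin.comp_snoc]
      exact h2 (v c)

include hrel in
/-- The truth lemma for formulas. -/
theorem sat₀ (χ : L.Formula ℕ) :
    χ.Realize (cls p a b τ hτ hsur) ↔ χ ∈ Theta p a b τ := by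
  have h := sat p hrel a b τ hτ hsur (n := 0) χ (fun i => i.elim0)
  have h1 : χ.Realize (cls p a b τ hτ hsur) ↔ BoundedFormula.Realize χ
      (cls p a b τ hτ hsur) (cls p a b τ hτ hsur ∘ fun i : Fin 0 => i.elim0) :=
    iff_of_eq (congrArg (BoundedFormula.Realize χ (cls p a b τ hτ hsur))
      (Subsingleton.elim _ _))
  have h2 : cf χ (fun i : Fin 0 => i.elim0) ∈ Theta p a b τ ↔ χ ∈ Theta p a b τ := by
    refine theta_equiv p a b τ hτ hsur ?_
    intro v hv
    rw [realize_cf]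
    exact iff_of_eq (congrArg (BoundedFormula.Realize χ v) (Subsingleton.elim _ _))
  rw [h1, h, h2]

theorem formula_realize_iInf {M : Type*} [L.Structure M] {β α : Type*} (s : Finset β)
    (f : β → L.Formula α) (v : α → M) :
    Formula.Realize (oldIInf s f) v ↔ ∀ x ∈ s, (f x).Realize v :=
  realize_oldIInf s f v default

include hrel hτ hsur in
theorem kk_model (T : L.Theory) (hNT : N ⊨ T) : (KK p a b τ hτ hsur) ⊨ T := by
  haveI : N ⊨ T := hNT
  refine ⟨fun {φT} hφT => ?_⟩
  have hmem : (Formula.relabel (fun e : Empty => e.elim) φT) ∈ Theta p a b τ := by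
    refine theta_taut p a b τ hτ hsur ?_
    intro v hv
    rw [Formula.realize_relabel]
    have : (v ∘ fun e : Empty => e.elim) = default := Subsingleton.elim _ _
    rw [this]
    exact T.realize_sentence_of_mem hφT
  have := (sat₀ p hrel a b τ hτ hsur _).2 hmem
  rw [Formula.realize_relabel] at this
  have h2 : ((cls p a b τ hτ hsur) ∘ fun e : Empty => e.elim) = default := Subsingleton.elim _ _
  rw [h2] at this
  exact this

include hrel in
theorem pset_cls_iff (i : ℕ) :
    cls p a b τ hτ hsur i ∈ Pset p (KK p a b τ hτ hsur) ↔ pF p i ∈ Theta p a b τ := by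
  rw [← sat₀ p hrel a b τ hτ hsur (pF p i)]
  exact (realize_pF p (cls p a b τ hτ hsur) i).symm

include hrel in
theorem pset_kk_eq (hA : ∀ i, a i ∈ Pset p N) {x : KK p a b τ hτ hsur}
    (hx : x ∈ Pset p (KK p a b τ hτ hsur)) : ∃ j, x = cls p a b τ hτ hsur (2 * j) := by
  obtain ⟨i, rfl⟩ := cls_surjective p a b τ hτ hsur x
  rcases theta_collapse p a b τ hτ i with ⟨j, hj⟩ | hbad
  · exact ⟨j, (cls_eq p a b τ hτ hsur).2 hj⟩
  · exfalso
    exact theta_not_both p a b τ hτ hsur ((pset_cls_iff p hrel a b τ hτ hsur i).1 hx) hbad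

include hrel in
theorem cls_even_mem (hA : ∀ i, a i ∈ Pset p N) (j : ℕ) :
    cls p a b τ hτ hsur (2 * j) ∈ Pset p (KK p a b τ hτ hsur) := by
  rw [pset_cls_iff p hrel a b τ hτ hsur]
  refine theta_taut p a b τ hτ hsur ?_
  intro v hv
  rw [realize_pF, hv j]
  exact hA j

include hrel in
theorem cls_even_eq_of {i j : ℕ} (hij : a i = a j) :
    cls p a b τ hτ hsur (2 * i) = cls p a b τ hτ hsur (2 * j) := by
  rw [cls_eq]
  refine theta_taut p a b τ hτ hsur ?_
  intro v hv
  rw [realize_eqF, hv i, hv j, hij]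

omit [L.Structure N] in
theorem even_half {y : ℕ} (hy : y % 2 = 0) : 2 * (y / 2) = y := by omega

include hsur in
/-- The density of the omitting requirement, given non-isolation. -/
theorem omit_density (hA : ∀ i, a i ∈ Pset p N)
    (hniso : ¬ IsolatedOverP p N b)
    (s : Finset (L.Formula ℕ)) (hs : Rlz a s) (c : Fin m → ℕ) :
    ∃ q : Σ k, L.Formula (Fin m ⊕ Fin k) × (Fin k → ℕ),
      q.2.1.Realize (Sum.elim b (a ∘ q.2.2)) ∧
      Rlz a (insert ((q.2.1.relabel (Sum.elim c (fun j => 2 * q.2.2 j))).not) s) := by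
  classical
  by_contra hno
  push_neg at hno
  obtain ⟨v0, hv0, hr0⟩ := hs
  -- the relevant variables
  set u : Finset ℕ := (s.sup BoundedFormula.freeVarFinset) ∪ Finset.image c Finset.univ with hu
  set E : Finset ℕ := u.filter (fun i => (¬ ∃ j, c j = i) ∧ i % 2 = 0) with hE
  set X : Finset ℕ := u.filter (fun i => (¬ ∃ j, c j = i) ∧ i % 2 = 1) with hX
  set k : ℕ := E.card + m with hk
  set splitIdx : Fin k ≃ (Fin E.card ⊕ Fin m) := finSumFinEquiv.symm with hsplitIdx
  set dIdx : Fin k → ℕ := fun t =>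
    Sum.elim (fun te => (↑(E.equivFin.symm te) : ℕ) / 2)
      (fun j => if c j % 2 = 0 then c j / 2 else 0) (splitIdx t) with hdIdx
  set dval : Fin k → N := fun t => a (dIdx t) with hdval
  set ρ : ℕ → (Fin m ⊕ Fin k) ⊕ ((↥X) ⊕ Unit) :=
    fun i =>
      if h : ∃ j, c j = i then Sum.inl (Sum.inl (Classical.choose h))
      else if h2 : i ∈ E then
        Sum.inl (Sum.inr (splitIdx.symm (Sum.inl (E.equivFin ⟨i, h2⟩))))
      else if h3 : i ∈ X then Sum.inr (Sum.inl ⟨i, h3⟩)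
      else Sum.inr (Sum.inr ()) with hρ
  set base : L.Formula ℕ := oldIInf s id with hbase
  set dupPairs : Finset (Fin m × Fin m) :=
    Finset.univ.filter (fun jj : Fin m × Fin m => c jj.1 = c jj.2) with hdup
  set evenIdx : Finset (Fin m) := Finset.univ.filter (fun j : Fin m => c j % 2 = 0) with heven
  set core : L.Formula ((Fin m ⊕ Fin k) ⊕ ((↥X) ⊕ Unit)) :=
    (Formula.relabel ρ base) ⊓
      ((oldIInf dupPairs
        (fun jj => Term.equal (Term.var (Sum.inl (Sum.inl jj.1)))
          (Term.var (Sum.inl (Sum.inl jj.2))))) ⊓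
      (oldIInf evenIdx
        (fun j => Term.equal (Term.var (Sum.inl (Sum.inl j)))
          (Term.var (Sum.inl (Sum.inr (splitIdx.symm (Sum.inr j)))))))) with hcore
  set δ : L.Formula (Fin m ⊕ Fin k) := oldIExs (f := id) core with hδ
  -- computation rules
  have hdIdx1 : ∀ te, dIdx (splitIdx.symm (Sum.inl te)) = (↑(E.equivFin.symm te) : ℕ) / 2 := by
    intro te
    rw [hdIdx]
    simp [Equiv.apply_symm_apply]
  have hdIdx2 : ∀ j, dIdx (splitIdx.symm (Sum.inr j)) = if c j % 2 = 0 then c j / 2 else 0 := by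
    intro j
    rw [hdIdx]
    simp [Equiv.apply_symm_apply]
  have hcmem : ∀ j, c j ∈ u := by
    intro j
    exact Finset.mem_union_right _ (Finset.mem_image_of_mem c (Finset.mem_univ j))
  have hfv : ∀ φ ∈ s, ∀ y ∈ (φ : L.Formula ℕ).freeVarFinset, y ∈ u := by
    intro φ hφ y hy
    exact Finset.mem_union_left _ (Finset.mem_of_subset (Finset.le_sup hφ) hy)
  -- the realization of core characterizes what we need
  have hcore_realize : ∀ (w : ((Fin m ⊕ Fin k) ⊕ ((↥X) ⊕ Unit)) → N),
      core.Realize w ↔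
        ((∀ φ ∈ s, Formula.Realize φ (w ∘ ρ)) ∧
         (∀ jj : Fin m × Fin m, c jj.1 = c jj.2 →
            w (Sum.inl (Sum.inl jj.1)) = w (Sum.inl (Sum.inl jj.2))) ∧
         (∀ j : Fin m, c j % 2 = 0 →
            w (Sum.inl (Sum.inl j)) = w (Sum.inl (Sum.inr (splitIdx.symm (Sum.inr j)))))) := by
    intro w
    rw [hcore, Formula.realize_inf, Formula.realize_inf, Formula.realize_relabel]
    constructor
    · rintro ⟨h1, h2, h3⟩
      refine ⟨(formula_realize_iInf s id (w ∘ ρ)).1 h1, ?_, ?_⟩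
      · intro jj hjj
        have := (formula_realize_iInf dupPairs _ w).1 h2 jj
          (by rw [hdup]; simp [hjj])
        rw [Formula.realize_equal, Term.realize_var, Term.realize_var] at this
        exact this
      · intro j hj
        have := (formula_realize_iInf evenIdx _ w).1 h3 j
          (by rw [heven]; simp [hj])
        rw [Formula.realize_equal, Term.realize_var, Term.realize_var] at this
        exact this
    · rintro ⟨h1, h2, h3⟩
      refine ⟨(formula_realize_iInf s id (w ∘ ρ)).2 h1, ?_, ?_⟩
      · refine (formula_realize_iInf dupPairs _ w).2 ?_
        intro jj hjj
        rw [Formula.realize_equal, Term.realize_var, Term.realize_var]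
        rw [hdup] at hjj
        exact h2 jj (Finset.mem_filter.1 hjj).2
      · refine (formula_realize_iInf evenIdx _ w).2 ?_
        intro j hj
        rw [Formula.realize_equal, Term.realize_var, Term.realize_var]
        rw [heven] at hj
        exact h3 j (Finset.mem_filter.1 hj).2
  -- F1: δ is realized at (v0 ∘ c, dval)
  set ii0 : ((↥X) ⊕ Unit) → N := Sum.elim (fun xx => v0 ↑xx) (fun _ => v0 0) with hii0
  set w0 : ((Fin m ⊕ Fin k) ⊕ ((↥X) ⊕ Unit)) → N :=
    Sum.elim (Sum.elim (v0 ∘ c) dval) ii0 with hw0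
  have hag0 : ∀ y ∈ u, w0 (ρ y) = v0 y := by
    intro y hy
    simp only [hρ]
    by_cases h : ∃ j, c j = y
    · simp only [dif_pos h]
      rw [hw0]
      show v0 (c (Classical.choose h)) = v0 y
      rw [Classical.choose_spec h]
    · rw [dif_neg h]
      by_cases h2 : y ∈ E
      · rw [dif_pos h2]
        rw [hw0]
        show dval (splitIdx.symm (Sum.inl (E.equivFin ⟨y, h2⟩))) = v0 y
        rw [hdval]
        show a (dIdx (splitIdx.symm (Sum.inl (E.equivFin ⟨y, h2⟩)))) = v0 y
        rw [hdIdx1, Equiv.symm_apply_apply]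
        have hyev : y % 2 = 0 := by
          have := (Finset.mem_filter.1 h2).2
          exact this.2
        calc a (y / 2) = v0 (2 * (y / 2)) := (hv0 _).symm
          _ = v0 y := by rw [even_half hyev]
      · have h3 : y ∈ X := by
          rw [hX, Finset.mem_filter]
          refine ⟨hy, h, ?_⟩
          rcases Nat.mod_two_eq_zero_or_one y with h0 | h1
          · exact absurd (by rw [hE, Finset.mem_filter]; exact ⟨hy, h, h0⟩) h2
          · exact h1
        rw [dif_neg h2, dif_pos h3]
        rfl
  have hF1 : δ.Realize (Sum.elim (v0 ∘ c) dval) := by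
    rw [hδ, realize_oldIExs]
    refine ⟨ii0, ?_⟩
    have hfn : (fun a0 => Sum.elim (Sum.elim (v0 ∘ c) dval) ii0 (id a0)) = w0 := by
      funext a0
      rw [hw0]
      rfl
    rw [hfn, hcore_realize w0]
    refine ⟨?_, ?_, ?_⟩
    · intro φ hφ
      exact (realize_congr_freeVar φ
        (fun y hy => hag0 y (hfv φ hφ y hy)) default).2 (hr0 φ hφ)
    · intro jj hjj
      rw [hw0]
      show v0 (c jj.1) = v0 (c jj.2)
      rw [hjj]
    · intro j hj
      rw [hw0]
      show v0 (c j) = dval (splitIdx.symm (Sum.inr j))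
      rw [hdval]
      show v0 (c j) = a (dIdx (splitIdx.symm (Sum.inr j)))
      rw [hdIdx2, if_pos hj]
      calc v0 (c j) = v0 (2 * (c j / 2)) := by rw [even_half hj]
        _ = a (c j / 2) := hv0 _
  -- F2: transfer from b to any realization of δ
  have hF2 : ∀ (x : Fin m → N), δ.Realize (Sum.elim x dval) →
      ∀ (k' : ℕ) (ψ : L.Formula (Fin m ⊕ Fin k')) (d' : Fin k' → ℕ),
        ψ.Realize (Sum.elim b (a ∘ d')) → ψ.Realize (Sum.elim x (a ∘ d')) := by
    intro x hx k' ψ d' hψb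
    rw [hδ, realize_oldIExs] at hx
    obtain ⟨ii, hii⟩ := hx
    obtain ⟨hbase1, hdup1, heven1⟩ := (hcore_realize _).1 hii
    set v1 : ℕ → N := fun i => if i % 2 = 0 then a (i / 2)
      else Sum.elim (Sum.elim x dval) ii (ρ i) with hv1
    have hpin1 : pin a v1 := by
      intro i
      simp only [hv1]
      rw [if_pos (by omega : (2 * i) % 2 = 0)]
      congr 1
      omega
    have hvc : ∀ j, v1 (c j) = x j := by
      intro j
      by_cases hce : c j % 2 = 0
      · simp only [hv1]
        rw [if_pos hce]
        have h2 : x j = dval (splitIdx.symm (Sum.inr j)) := heven1 j hce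
        rw [h2, hdval]
        show a (c j / 2) = a (dIdx (splitIdx.symm (Sum.inr j)))
        rw [hdIdx2, if_pos hce]
      · simp only [hv1]
        rw [if_neg hce]
        simp only [hρ]
        have hex : ∃ j', c j' = c j := ⟨j, rfl⟩
        simp only [dif_pos hex]
        show x (Classical.choose hex) = x j
        exact hdup1 (Classical.choose hex, j) (Classical.choose_spec hex)
    have hag1 : ∀ y ∈ u, v1 y = Sum.elim (Sum.elim x dval) ii (ρ y) := by
      intro y hy
      by_cases hye : y % 2 = 0
      · have hv1y : v1 y = a (y / 2) := by
          simp only [hv1]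
          rw [if_pos hye]
        rw [hv1y]
        simp only [hρ]
        by_cases h : ∃ j, c j = y
        · simp only [dif_pos h]
          show a (y / 2) = x (Classical.choose h)
          have hcy : c (Classical.choose h) = y := Classical.choose_spec h
          have hxx := hvc (Classical.choose h)
          rw [hcy] at hxx
          have hv1y2 : v1 y = a (y / 2) := by
            simp only [hv1]
            rw [if_pos hye]
          rw [hv1y2] at hxx
          exact hxx
        · rw [dif_neg h]
          by_cases h2 : y ∈ E
          · rw [dif_pos h2]
            show a (y / 2) = dval (splitIdx.symm (Sum.inl (E.equivFin ⟨y, h2⟩)))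
            rw [hdval]
            show a (y / 2) = a (dIdx (splitIdx.symm (Sum.inl (E.equivFin ⟨y, h2⟩))))
            rw [hdIdx1, Equiv.symm_apply_apply]
          · exact absurd (by rw [hE, Finset.mem_filter]; exact ⟨hy, h, hye⟩) h2
      · simp only [hv1]
        rw [if_neg hye]
    have hrs1 : ∀ φ ∈ s, Formula.Realize φ v1 := by
      intro φ hφ
      refine (realize_congr_freeVar φ
        (fun y hy => (hag1 y (hfv φ hφ y hy)).symm) default).1 ?_
      exact hbase1 φ hφ
    have hq := hno ⟨k', ψ, d'⟩ hψb
    have hrel1 : (ψ.relabel (Sum.elim c (fun j => 2 * d' j))).Realize v1 := by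
      by_contra hcon
      refine hq ⟨v1, hpin1, fun χ hχ => ?_⟩
      rcases Finset.mem_insert.1 hχ with rfl | hχ
      · rw [Formula.realize_not]
        exact hcon
      · exact hrs1 χ hχ
    rw [Formula.realize_relabel] at hrel1
    have hfn2 : (v1 ∘ Sum.elim c fun j => 2 * d' j) = Sum.elim x (a ∘ d') := by
      funext z
      cases z with
      | inl j => exact hvc j
      | inr j =>
        show v1 (2 * d' j) = a (d' j)
        simp only [hv1]
        rw [if_pos (by omega : (2 * d' j) % 2 = 0)]
        congr 1
        omega
    rw [hfn2] at hrel1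
    exact hrel1
  -- F3: δ holds at b
  have hdvala : dval = a ∘ dIdx := by
    rw [hdval]
    rfl
  have hF3 : δ.Realize (Sum.elim b dval) := by
    by_contra hcon
    have hbnot : (Formula.not δ).Realize (Sum.elim b (a ∘ dIdx)) := by
      rw [Formula.realize_not, ← hdvala]
      exact hcon
    have := hF2 (v0 ∘ c) hF1 k δ.not dIdx hbnot
    rw [Formula.realize_not, ← hdvala] at this
    exact this hF1
  -- F4: contradiction with non-isolation
  refine hniso ⟨k, δ, dval, fun t => hdvala ▸ hA (dIdx t), hF3, ?_⟩
  intro k' ψ d hd hψb x' hx'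
  have hidx : ∀ i, a (Classical.choose (hsur (d i) (hd i))) = d i :=
    fun i => Classical.choose_spec (hsur (d i) (hd i))
  have had : (a ∘ fun i => Classical.choose (hsur (d i) (hd i))) = d := funext hidx
  have := hF2 x' hx' k' ψ (fun i => Classical.choose (hsur (d i) (hd i)))
    (by rw [had]; exact hψb)
  rw [had] at this
  exact this

end Henkin

section Isolated

open FirstOrder FirstOrder.Language

attribute [local instance] Classical.propDecidable

variable {L : FirstOrder.Language.{u, v}}

/-- Every countable model of a relatively `(ω,ω)`-categorical theory is atomic over its
`P`-part. -/
theorem isolated_of_cat [Countable L.Symbols] (p : L.Relations 1) (hrel : Relational L)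
    (T : L.Theory) (hcat : RelativelyCatCC p hrel T)
    (N : Type (max u v)) [L.Structure N] [Countable N] (hNT : N ⊨ T)
    (hPinf : (Pset p N).Infinite) {m : ℕ} (b : Fin m → N) : IsolatedOverP p N b := by
  classical
  by_contra hniso
  haveI : Infinite ↥(Pset p N) := hPinf.to_subtype
  obtain ⟨dd⟩ := nonempty_denumerable ↥(Pset p N)
  haveI := dd
  let e : ℕ ≃ ↥(Pset p N) := (Denumerable.eqv ↥(Pset p N)).symm
  set a : ℕ → N := fun i => ↑(e i) with ha
  have hA : ∀ i, a i ∈ Pset p N := fun i => (e i).2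
  have hsur : ∀ x ∈ Pset p N, ∃ j, a j = x := by
    intro x hx
    refine ⟨e.symm ⟨x, hx⟩, ?_⟩
    rw [ha]
    simp
  haveI : Nonempty (TaskT L m) := ⟨Sum.inl ⊥⟩
  obtain ⟨τ, hτ⟩ := exists_surjective_nat (TaskT L m)
  haveI hKc : Countable (KK p a b τ hτ hsur) :=
    (cls_surjective p a b τ hτ hsur).countable
  have hKT : KK p a b τ hτ hsur ⊨ T := kk_model p hrel a b τ hτ hsur T hNT
  -- the isomorphism of the P-parts
  have haev : ∀ (x : N) (hx : x ∈ Pset p N), a ((e.symm ⟨x, hx⟩ : ℕ)) = x := by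
    intro x hx
    rw [ha]
    simp
  set F0 : ↥(Psub p hrel N) → ↥(Psub p hrel (KK p a b τ hτ hsur)) := fun x =>
    ⟨cls p a b τ hτ hsur (2 * (e.symm ⟨↑x, x.2⟩ : ℕ)),
      cls_even_mem p hrel a b τ hτ hsur hA _⟩ with hF0
  have hF0inj : Function.Injective F0 := by
    intro x y hxy
    have h1 : cls p a b τ hτ hsur (2 * (e.symm ⟨↑x, x.2⟩ : ℕ))
        = cls p a b τ hτ hsur (2 * (e.symm ⟨↑y, y.2⟩ : ℕ)) := congrArg Subtype.val hxy
    rw [cls_eq] at h1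
    have h2 : a (e.symm ⟨↑x, x.2⟩ : ℕ) = a (e.symm ⟨↑y, y.2⟩ : ℕ) := by
      refine (theta_iff p a b τ hτ hsur ?_).1 h1
      intro v hv
      rw [realize_eqF, hv, hv]
    replace h2 := (haev _ x.2).symm.trans (h2.trans (haev _ y.2))
    exact Subtype.ext h2
  have hF0surj : Function.Surjective F0 := by
    intro y
    obtain ⟨j, hj⟩ := pset_kk_eq p hrel a b τ hτ hsur hA y.2
    refine ⟨⟨a j, hA j⟩, ?_⟩
    refine Subtype.ext ?_
    rw [hF0]
    show cls p a b τ hτ hsur (2 * (e.symm ⟨a j, hA j⟩ : ℕ)) = ↑y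
    rw [hj]
    exact cls_even_eq_of p hrel a b τ hτ hsur (haev (a j) (hA j))
  set f : ↥(Psub p hrel N) ≃[L] ↥(Psub p hrel (KK p a b τ hτ hsur)) :=
    { toEquiv := Equiv.ofBijective F0 ⟨hF0inj, hF0surj⟩
      map_fun' := fun {n} fn _ => (hrel n).elim fn
      map_rel' := by
        intro l R x
        show RelMap R (fun i => ((F0 (x i) : KK p a b τ hτ hsur))) ↔ RelMap R (fun i => (↑(x i) : N))
        have hx2 : ∀ i, (F0 (x i) : KK p a b τ hτ hsur)
            = cls p a b τ hτ hsur (2 * (e.symm ⟨↑(x i), (x i).2⟩ : ℕ)) := fun i => rfl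
        simp only [hx2]
        rw [krel_iff p a b τ hτ hsur R (fun i => 2 * (e.symm ⟨↑(x i), (x i).2⟩ : ℕ))]
        refine theta_iff p a b τ hτ hsur ?_
        intro v hv
        rw [realize_rF]
        have : v ∘ (fun i => 2 * (e.symm ⟨↑(x i), (x i).2⟩ : ℕ)) = fun i => (↑(x i) : N) := by
          funext i
          show v (2 * (e.symm ⟨↑(x i), (x i).2⟩ : ℕ)) = ↑(x i)
          rw [hv]
          exact haev _ (x i).2
        rw [this] } with hf
  obtain ⟨g, hg⟩ := hcat N (KK p a b τ hτ hsur) hNT hKT inferInstance hKc f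
  -- choose representatives for the image of b
  have hrep : ∀ i : Fin m, ∃ ci : ℕ, cls p a b τ hτ hsur ci = g (b i) := fun i =>
    cls_surjective p a b τ hτ hsur (g (b i))
  choose cᵣ hcᵣ using hrep
  -- run the omitting task
  obtain ⟨n0, hn0⟩ := hτ (Sum.inr (Sum.inr (Sum.inr cᵣ)))
  have hS : seqS p a b τ (n0 + 1) = step p a b (Sum.inr (Sum.inr (Sum.inr cᵣ)))
      (seqS p a b τ n0) := by rw [seqS, hn0]
  have hcond : ∃ q : Σ k, L.Formula (Fin m ⊕ Fin k) × (Fin k → ℕ),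
      q.2.1.Realize (Sum.elim b (a ∘ q.2.2)) ∧
      Rlz a (insert ((q.2.1.relabel (Sum.elim cᵣ (fun j => 2 * q.2.2 j))).not)
        (seqS p a b τ n0)) :=
    omit_density p a b hsur hA hniso _ (Rlz_seqS p a b τ hsur n0) cᵣ
  set q := Classical.choose hcond with hq
  have hqspec := Classical.choose_spec hcond
  have hmem : ((q.2.1.relabel (Sum.elim cᵣ (fun j => 2 * q.2.2 j))).not) ∈ Theta p a b τ := by
    refine ⟨n0 + 1, ?_⟩
    rw [hS]
    simp only [step, dif_pos hcond]
    rw [← hq]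
    exact Finset.mem_insert_self _ _
  -- transfer to K and back to N
  have hKnot := (sat₀ p hrel a b τ hτ hsur _).2 hmem
  rw [Formula.realize_not, Formula.realize_relabel] at hKnot
  have hcomp : (cls p a b τ hτ hsur ∘ Sum.elim cᵣ fun j => 2 * q.2.2 j)
      = ⇑g ∘ (Sum.elim b (a ∘ q.2.2)) := by
    funext z
    cases z with
    | inl i =>
      show cls p a b τ hτ hsur (cᵣ i) = g (b i)
      exact hcᵣ i
    | inr j =>
      show cls p a b τ hτ hsur (2 * q.2.2 j) = g (a (q.2.2 j))
      have hgf := hg ⟨a (q.2.2 j), hA _⟩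
      rw [hgf]
      show _ = ((F0 ⟨a (q.2.2 j), hA (q.2.2 j)⟩ : KK p a b τ hτ hsur))
      rw [hF0]
      exact (cls_even_eq_of p hrel a b τ hτ hsur (haev (a (q.2.2 j)) (hA _))).symm
  rw [hcomp] at hKnot
  rw [StrongHomClass.realize_formula g] at hKnot
  exact hKnot hqspec.1

end Isolated

section Bridge

open FirstOrder FirstOrder.Language

variable {L : FirstOrder.Language.{u, v}}

theorem pset_map_elem (p : L.Relations 1) {N0 M1 : Type*} [L.Structure N0] [L.Structure M1]
    (E : N0 ↪ₑ[L] M1) {x : N0} (hx : x ∈ Pset p N0) : E x ∈ Pset p M1 := by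
  have h0 : (Relations.formula p (fun _ => Term.var (0 : Fin 1))).Realize (fun _ : Fin 1 => x) :=
    (realize_pformula p _ 0).2 hx
  have h1 := (E.map_formula (Relations.formula p (fun _ => Term.var (0 : Fin 1)))
    (fun _ : Fin 1 => x)).2 h0
  have h2 : (⇑E ∘ fun _ : Fin 1 => x) = fun _ : Fin 1 => E x := rfl
  rw [h2] at h1
  exact (realize_pformula p _ 0).1 h1

/-- The bridge: a formula isolating the type of `b` over the `P`-part of a small elementary
submodel isolates it against arbitrary `P`-parameters of the big model. -/
theorem bridge (p : L.Relations 1) {Mbar N0 : Type*} [L.Structure Mbar] [L.Structure N0]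
    (E : N0 ↪ₑ[L] Mbar) {m k : ℕ} (b0 : Fin m → N0)
    (θ : L.Formula (Fin m ⊕ Fin k)) (d0 : Fin k → N0)
    (hiso : ∀ (j : ℕ) (ψ : L.Formula (Fin m ⊕ Fin j)) (w : Fin j → N0),
      (∀ i, w i ∈ Pset p N0) → ψ.Realize (Sum.elim b0 w) →
      ∀ a' : Fin m → N0, θ.Realize (Sum.elim a' d0) → ψ.Realize (Sum.elim a' w))
    (j : ℕ) (ψ : L.Formula (Fin m ⊕ Fin j)) (w : Fin j → Mbar)
    (hw : ∀ i, w i ∈ Pset p Mbar) (hψ : ψ.Realize (Sum.elim (⇑E ∘ b0) w))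
    (b' : Fin m → Mbar) (hθ' : θ.Realize (Sum.elim b' (⇑E ∘ d0))) :
    ψ.Realize (Sum.elim b' w) := by
  classical
  by_contra hcon
  -- build the existential configuration formula
  set r1 : (Fin m ⊕ Fin j) → ((Fin m ⊕ Fin k) ⊕ (Fin j ⊕ Fin m)) :=
    Sum.elim (fun i => Sum.inl (Sum.inl i)) (fun i => Sum.inr (Sum.inl i)) with hr1
  set r2 : (Fin m ⊕ Fin k) → ((Fin m ⊕ Fin k) ⊕ (Fin j ⊕ Fin m)) :=
    Sum.elim (fun i => Sum.inr (Sum.inr i)) (fun i => Sum.inl (Sum.inr i)) with hr2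
  set r3 : (Fin m ⊕ Fin j) → ((Fin m ⊕ Fin k) ⊕ (Fin j ⊕ Fin m)) :=
    Sum.elim (fun i => Sum.inr (Sum.inr i)) (fun i => Sum.inr (Sum.inl i)) with hr3
  set core : L.Formula ((Fin m ⊕ Fin k) ⊕ (Fin j ⊕ Fin m)) :=
    (oldIInf (Finset.univ : Finset (Fin j))
        (fun i => Relations.formula p (fun _ => Term.var (Sum.inr (Sum.inl i))))) ⊓
      ((Formula.relabel r1 ψ) ⊓ ((Formula.relabel r2 θ) ⊓ (Formula.relabel r3 ψ).not)) with hcore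
  set Ξ : L.Formula (Fin m ⊕ Fin k) := oldIExs (f := id) core with hΞ
  have hcoreM : Ξ.Realize (Sum.elim (⇑E ∘ b0) (⇑E ∘ d0)) := by
    rw [hΞ, realize_oldIExs]
    refine ⟨Sum.elim w b', ?_⟩
    have hfn : (fun a0 => Sum.elim (Sum.elim (⇑E ∘ b0) (⇑E ∘ d0)) (Sum.elim w b') (id a0))
        = Sum.elim (Sum.elim (⇑E ∘ b0) (⇑E ∘ d0)) (Sum.elim w b') := rfl
    rw [hfn, hcore]
    rw [Formula.realize_inf, Formula.realize_inf, Formula.realize_inf]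
    refine ⟨?_, ?_, ?_, ?_⟩
    · refine (formula_realize_iInf _ _ _).2 ?_
      intro i _
      exact (realize_pformula p _ _).2 (hw i)
    · rw [Formula.realize_relabel]
      have : (Sum.elim (Sum.elim (⇑E ∘ b0) (⇑E ∘ d0)) (Sum.elim w b') ∘ r1)
          = Sum.elim (⇑E ∘ b0) w := by
        funext z
        cases z <;> rfl
      rw [this]
      exact hψ
    · rw [Formula.realize_relabel]
      have : (Sum.elim (Sum.elim (⇑E ∘ b0) (⇑E ∘ d0)) (Sum.elim w b') ∘ r2)
          = Sum.elim b' (⇑E ∘ d0) := by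
        funext z
        cases z <;> rfl
      rw [this]
      exact hθ'
    · rw [Formula.realize_not, Formula.realize_relabel]
      have : (Sum.elim (Sum.elim (⇑E ∘ b0) (⇑E ∘ d0)) (Sum.elim w b') ∘ r3)
          = Sum.elim b' w := by
        funext z
        cases z <;> rfl
      rw [this]
      exact hcon
  -- transfer down to N0
  have hdown : Ξ.Realize (Sum.elim b0 d0) := by
    have hEe : (⇑E ∘ Sum.elim b0 d0) = Sum.elim (⇑E ∘ b0) (⇑E ∘ d0) := by
      funext z
      cases z <;> rfl
    have := (E.map_formula Ξ (Sum.elim b0 d0))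
    rw [hEe] at this
    exact this.1 hcoreM
  rw [hΞ, realize_oldIExs] at hdown
  obtain ⟨ii, hii⟩ := hdown
  rw [hcore] at hii
  rw [Formula.realize_inf, Formula.realize_inf, Formula.realize_inf] at hii
  obtain ⟨hPw, hψ0, hθ0, hnψ0⟩ := hii
  set w0 : Fin j → N0 := fun i => ii (Sum.inl i) with hw0
  set b'0 : Fin m → N0 := fun i => ii (Sum.inr i) with hb'0
  have hPw0 : ∀ i, w0 i ∈ Pset p N0 := by
    intro i
    have := (formula_realize_iInf _ _ _).1 hPw i (Finset.mem_univ i)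
    exact (realize_pformula p _ _).1 this
  have hψ0' : ψ.Realize (Sum.elim b0 w0) := by
    rw [Formula.realize_relabel] at hψ0
    have : ((fun a0 => Sum.elim (Sum.elim b0 d0) ii (id a0)) ∘ r1) = Sum.elim b0 w0 := by
      funext z
      cases z <;> rfl
    rw [this] at hψ0
    exact hψ0
  have hθ0' : θ.Realize (Sum.elim b'0 d0) := by
    rw [Formula.realize_relabel] at hθ0
    have : ((fun a0 => Sum.elim (Sum.elim b0 d0) ii (id a0)) ∘ r2) = Sum.elim b'0 d0 := by
      funext z
      cases z <;> rfl
    rw [this] at hθ0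
    exact hθ0
  have hnψ0' : ¬ ψ.Realize (Sum.elim b'0 w0) := by
    rw [Formula.realize_not, Formula.realize_relabel] at hnψ0
    have : ((fun a0 => Sum.elim (Sum.elim b0 d0) ii (id a0)) ∘ r3) = Sum.elim b'0 w0 := by
      funext z
      cases z <;> rfl
    rw [this] at hnψ0
    exact hnψ0
  exact hnψ0' (hiso j ψ w0 hPw0 hψ0' b'0 hθ0')

end Bridge

section Main

open FirstOrder FirstOrder.Language

attribute [local instance] Classical.propDecidable

variable {L : FirstOrder.Language.{u, v}}

theorem mem_psub_iff (p : L.Relations 1) (hrel : Relational L) {M' : Type*} [L.Structure M']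
    {x : M'} : x ∈ Psub p hrel M' ↔ x ∈ Pset p M' := Iff.rfl

theorem union_complete_main [Countable L.Symbols]
    (p : L.Relations 1) (hrel : Relational L)
    (T : L.Theory) (hqe : HasQE T) (hinf : PInfinite p T)
    (hcat : RelativelyCatCC p hrel T)
    (Mbar : Type (max u v)) [L.Structure Mbar] (hMbar : Mbar ⊨ T)
    (M : L.ElementarySubstructure Mbar)
    (N₁ N₂ : L.ElementarySubstructure (Psub p hrel Mbar))
    (h12 : (N₁ : Set (Psub p hrel Mbar)) ⊆ (N₂ : Set (Psub p hrel Mbar)))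
    (hMP : (M : Set Mbar) ∩ Pset p Mbar =
      Subtype.val '' (N₁ : Set (Psub p hrel Mbar))) :
    CompleteSet p Mbar
      ((M : Set Mbar) ∪ Subtype.val '' (N₂ : Set (Psub p hrel Mbar))) := by
  classical
  haveI : Mbar ⊨ T := hMbar
  intro n φ c hc hex
  obtain ⟨e, heP, heφ⟩ := hex
  haveI hPS : Nonempty ↥(Psub p hrel Mbar) := ⟨⟨e, (mem_psub_iff p hrel).2 heP⟩⟩
  haveI : Nonempty ↥N₁ := inferInstance
  obtain ⟨z0⟩ := ‹Nonempty ↥N₁›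
  set z0P : ↥(Psub p hrel Mbar) := ↑z0 with hz0P
  have hz0N2 : z0P ∈ N₂ := h12 z0.2
  have hz0M : (↑z0P : Mbar) ∈ (M : Set Mbar) := by
    have h' : (↑z0P : Mbar) ∈ Subtype.val '' (N₁ : Set (Psub p hrel Mbar)) := ⟨z0P, z0.2, rfl⟩
    rw [← hMP] at h'
    exact h'.1
  -- split the parameters into an M-part and an N₂-part
  set sel : Fin n → Bool := fun i => decide (c i ∈ (M : Set Mbar)) with hsel0
  have hsel : ∀ i, sel i = true ↔ c i ∈ (M : Set Mbar) := by
    intro i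
    simp [hsel0]
  set bM : Fin n → Mbar := fun i => if sel i then c i else ↑z0P with hbM
  have hbMM : ∀ i, bM i ∈ (M : Set Mbar) := by
    intro i
    simp only [hbM]
    by_cases h : sel i = true
    · rw [if_pos h]
      exact (hsel i).1 h
    · rw [if_neg h]
      exact hz0M
  set pick : Fin n → ↥(Psub p hrel Mbar) := fun i =>
    if h : ∃ z : ↥(Psub p hrel Mbar), z ∈ N₂ ∧ (↑z : Mbar) = c i then Classical.choose h
    else z0P with hpick
  have hpickN2 : ∀ i, pick i ∈ N₂ := by
    intro i
    simp only [hpick]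
    by_cases h : ∃ z : ↥(Psub p hrel Mbar), z ∈ N₂ ∧ (↑z : Mbar) = c i
    · simp only [dif_pos h]
      exact (Classical.choose_spec h).1
    · simp only [dif_neg h]
      exact hz0N2
  set cP : Fin n → Mbar := fun i => ↑(pick i) with hcP
  have hcPP : ∀ i, cP i ∈ Pset p Mbar := fun i => (mem_psub_iff p hrel).1 (pick i).2
  have hsplit : ∀ i, (if sel i then bM i else cP i) = c i := by
    intro i
    by_cases h : sel i = true
    · rw [if_pos h]
      simp only [hbM]
      rw [if_pos h]
    · rw [if_neg h]
      rcases hc i with hM | hN2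
      · exact absurd ((hsel i).2 hM) h
      · obtain ⟨z, hzN2, hz⟩ := hN2
        have hexz : ∃ z : ↥(Psub p hrel Mbar), z ∈ N₂ ∧ (↑z : Mbar) = c i := ⟨z, hzN2, hz⟩
        simp only [hcP, hpick]
        rw [dif_pos hexz]
        exact (Classical.choose_spec hexz).2
  -- the rewritten formula
  set rsp : (Fin 1 ⊕ Fin n) → (Fin 1 ⊕ (Fin n ⊕ Fin n)) :=
    Sum.map id (fun i => if sel i then Sum.inl i else Sum.inr i) with hrsp
  set φh : L.Formula (Fin 1 ⊕ (Fin n ⊕ Fin n)) := Formula.relabel rsp φ with hφh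
  have hφhiff : ∀ (x : Mbar) (y z : Fin n → Mbar),
      φh.Realize (Sum.elim (fun _ : Fin 1 => x) (Sum.elim y z)) ↔
      φ.Realize (Sum.elim (fun _ : Fin 1 => x)
        (fun i => if sel i then y i else z i)) := by
    intro x y z
    rw [hφh, Formula.realize_relabel]
    refine iff_of_eq (congrArg _ ?_)
    funext wv
    cases wv with
    | inl x1 => rfl
    | inr i =>
      by_cases h : sel i = true <;> simp [hrsp, h]
  -- a countable elementary substructure of M containing bM
  have hMmod : ↥M ⊨ T := inferInstance
  have hPinfMM : (Pset p ↥M).Infinite := hinf ↥M hMmod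
  haveI : Infinite ↥(Pset p ↥M) := hPinfMM.to_subtype
  haveI : Infinite ↥M := Infinite.of_injective (Subtype.val : ↥(Pset p ↥M) → ↥M)
    Subtype.val_injective
  set bM' : Fin n → ↥M := fun i => ⟨bM i, hbMM i⟩ with hbM'
  haveI : Countable ↥(Set.range bM') := (Set.finite_range bM').countable
  obtain ⟨S, hSsub, hScard⟩ := exists_elementarySubstructure_card_eq L (Set.range bM')
    (Cardinal.aleph0 : Cardinal.{max u v}) le_rfl
    (by rw [Cardinal.lift_le]; exact Cardinal.mk_le_aleph0)
    (by rw [Cardinal.lift_le]; exact Cardinal.mk_le_aleph0)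
    (by rw [Cardinal.lift_le]; exact Cardinal.aleph0_le_mk ↥M)
  haveI hScount : Countable ↥S := by
    rw [Cardinal.lift_inj] at hScard
    exact Cardinal.mk_le_aleph0_iff.1 (le_of_eq hScard)
  haveI hSmod : ↥S ⊨ T := inferInstance
  have hPinfS : (Pset p ↥S).Infinite := hinf ↥S hSmod
  set b0 : Fin n → ↥S := fun i => ⟨bM' i, hSsub ⟨i, rfl⟩⟩ with hb0
  obtain ⟨k, θ, d0, hd0P, hθ0, hiso⟩ :=
    isolated_of_cat p hrel T hcat ↥S hSmod hPinfS b0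
  set E : ↥S ↪ₑ[L] Mbar := (M.subtype).comp (S.subtype) with hE
  have hEval : ∀ x : ↥S, E x = ((↑(↑x : ↥M) : Mbar)) := fun x => rfl
  have hEb : ∀ i, E (b0 i) = bM i := fun i => rfl
  set d : Fin k → Mbar := fun i => E (d0 i) with hd
  have hdP : ∀ i, d i ∈ Pset p Mbar := fun i => pset_map_elem p E (hd0P i)
  have hdM : ∀ i, d i ∈ (M : Set Mbar) := by
    intro i
    rw [hd]
    exact ((S.subtype (d0 i)) : ↥M).2
  have hdN2 : ∀ i, ∃ z : ↥(Psub p hrel Mbar), z ∈ N₂ ∧ (↑z : Mbar) = d i := by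
    intro i
    have h1 : d i ∈ (M : Set Mbar) ∩ Pset p Mbar := ⟨hdM i, hdP i⟩
    rw [hMP] at h1
    obtain ⟨z, hz1, hz2⟩ := h1
    exact ⟨z, h12 hz1, hz2⟩
  choose dh hdhN2 hdhval using hdN2
  have hθM : θ.Realize (Sum.elim bM d) := by
    have hth := (E.map_formula θ (Sum.elim b0 d0))
    have hEe : ⇑E ∘ Sum.elim b0 d0 = Sum.elim bM d := by
      funext z
      cases z with
      | inl i => exact hEb i
      | inr i => rfl
    rw [hEe] at hth
    exact hth.2 hθ0
  have STRISO := bridge p E b0 θ d0 hiso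
  -- the witnessing formula Ω = P(x) ∧ ∃y (θ(y,d) ∧ φh(x,y,z))
  set rθ : (Fin n ⊕ Fin k) → ((Fin 1 ⊕ (Fin n ⊕ Fin k)) ⊕ Fin n) :=
    Sum.elim (fun i => Sum.inr i) (fun i => Sum.inl (Sum.inr (Sum.inr i))) with hrθ
  set rφ : (Fin 1 ⊕ (Fin n ⊕ Fin n)) → ((Fin 1 ⊕ (Fin n ⊕ Fin k)) ⊕ Fin n) :=
    Sum.elim (fun x1 => Sum.inl (Sum.inl x1))
      (Sum.elim (fun i => Sum.inr i) (fun i => Sum.inl (Sum.inr (Sum.inl i)))) with hrφ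
  set core2 : L.Formula ((Fin 1 ⊕ (Fin n ⊕ Fin k)) ⊕ Fin n) :=
    (Formula.relabel rθ θ) ⊓ (Formula.relabel rφ φh) with hcore2
  set χ : L.Formula (Fin 1 ⊕ (Fin n ⊕ Fin k)) := oldIExs (f := id) core2 with hχ
  set Ω : L.Formula (Fin 1 ⊕ (Fin n ⊕ Fin k)) :=
    (Relations.formula p (fun _ => Term.var (Sum.inl (0 : Fin 1)))) ⊓ χ with hΩ
  set EΩ : (Fin 1 ⊕ (Fin n ⊕ Fin k)) ≃ Fin (1 + (n + k)) :=
    (Equiv.sumCongr (Equiv.refl (Fin 1)) finSumFinEquiv).trans finSumFinEquiv with hEΩ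
  obtain ⟨ψqf, hψqf, hψequiv⟩ := hqe (1 + (n + k)) (Formula.relabel (⇑EΩ) Ω)
  set args : (Fin 1 ⊕ (Fin n ⊕ Fin k)) → Mbar :=
    Sum.elim (fun _ => e) (Sum.elim cP d) with hargs
  have hΩM : Ω.Realize args := by
    rw [hΩ, Formula.realize_inf]
    constructor
    · exact (realize_pformula p args (Sum.inl (0 : Fin 1))).2 heP
    · rw [hχ, realize_oldIExs]
      refine ⟨bM, ?_⟩
      rw [hcore2, Formula.realize_inf]
      constructor
      · rw [Formula.realize_relabel]
        have hfn : ((fun a0 => Sum.elim args bM (id a0)) ∘ rθ) = Sum.elim bM d := by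
          funext z
          cases z <;> rfl
        rw [hfn]
        exact hθM
      · rw [Formula.realize_relabel]
        have hfn : ((fun a0 => Sum.elim args bM (id a0)) ∘ rφ)
            = Sum.elim (fun _ : Fin 1 => e) (Sum.elim bM cP) := by
          funext z
          rcases z with x1 | (i | i) <;> rfl
        rw [hfn, hφhiff e bM cP]
        have hfn2 : (fun i => if sel i then bM i else cP i) = c :=
          funext hsplit
        rw [hfn2]
        exact heφ
  have hqfM : ψqf.Realize (args ∘ ⇑EΩ.symm) := by
    have h1 : (Formula.relabel (⇑EΩ) Ω).Realize (args ∘ ⇑EΩ.symm) := by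
      rw [Formula.realize_relabel]
      have hfn : ((args ∘ ⇑EΩ.symm) ∘ ⇑EΩ) = args := by
        funext z
        simp
      rw [hfn]
      exact hΩM
    exact (hψequiv Mbar hMbar (args ∘ ⇑EΩ.symm)).1 h1
  -- down into the P-part
  set ePh : ↥(Psub p hrel Mbar) := ⟨e, (mem_psub_iff p hrel).2 heP⟩ with hePh
  set argsP : (Fin 1 ⊕ (Fin n ⊕ Fin k)) → ↥(Psub p hrel Mbar) :=
    Sum.elim (fun _ => ePh) (Sum.elim pick dh) with hargsP
  have hvalargs : (Subtype.val ∘ argsP) = args := by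
    funext z
    rcases z with x1 | (i | i)
    · rfl
    · rfl
    · exact hdhval i
  have hqfP : ψqf.Realize (argsP ∘ ⇑EΩ.symm) := by
    have h1 := realize_of_isQF_formula ((Psub p hrel Mbar).subtype) hψqf (argsP ∘ ⇑EΩ.symm)
    have hfn : (⇑(Psub p hrel Mbar).subtype ∘ (argsP ∘ ⇑EΩ.symm)) = args ∘ ⇑EΩ.symm := by
      rw [Substructure.coe_subtype]
      rw [← Function.comp_assoc, hvalargs]
    rw [hfn] at h1
    exact h1.1 hqfM
  set ψ₂ : L.Formula (Fin 1 ⊕ (Fin n ⊕ Fin k)) := Formula.relabel (⇑EΩ.symm) ψqf with hψ₂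
  have hψ₂qf : ψ₂.IsQF := hψqf.relabel _
  set fEx : (Fin 1 ⊕ (Fin n ⊕ Fin k)) → ((Fin n ⊕ Fin k) ⊕ Fin 1) :=
    Sum.elim (fun x1 => Sum.inr x1) (fun z => Sum.inl z) with hfEx
  set ΨN : L.Formula (Fin n ⊕ Fin k) := oldIExs (f := fEx) ψ₂ with hΨN
  have hΨP : ΨN.Realize (Sum.elim pick dh) := by
    rw [hΨN, realize_oldIExs]
    refine ⟨fun _ => ePh, ?_⟩
    have hfn : (fun a => Sum.elim (Sum.elim pick dh) (fun _ => ePh) (fEx a)) = argsP := by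
      funext z
      rcases z with x1 | z <;> rfl
    rw [hfn, hψ₂, Formula.realize_relabel]
    exact hqfP
  -- into N₂ and back
  set argsN : (Fin n ⊕ Fin k) → ↥N₂ :=
    Sum.elim (fun i => (⟨pick i, hpickN2 i⟩ : ↥N₂)) (fun i => ⟨dh i, hdhN2 i⟩) with hargsN
  have hΨN2 : ΨN.Realize argsN := by
    have h1 := N₂.subtype.map_formula ΨN argsN
    have hfn : (⇑N₂.subtype ∘ argsN) = Sum.elim pick dh := by
      funext z
      rcases z with i | i <;> rfl
    rw [hfn] at h1
    exact h1.1 hΨP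
  rw [hΨN, realize_oldIExs] at hΨN2
  obtain ⟨eN, heN⟩ := hΨN2
  set e₂P : ↥(Psub p hrel Mbar) := ↑(eN 0) with he₂P
  set args2P : (Fin 1 ⊕ (Fin n ⊕ Fin k)) → ↥(Psub p hrel Mbar) :=
    Sum.elim (fun _ => e₂P) (Sum.elim pick dh) with hargs2P
  have hup1 : ψ₂.Realize args2P := by
    have h1 := N₂.subtype.map_formula ψ₂ (fun a => Sum.elim argsN eN (fEx a))
    have hfn : (⇑N₂.subtype ∘ fun a => Sum.elim argsN eN (fEx a)) = args2P := by
      funext z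
      rcases z with x1 | (i | i)
      · show (↑(eN x1) : ↥(Psub p hrel Mbar)) = e₂P
        rw [he₂P, Subsingleton.elim x1 0]
      · rfl
      · rfl
    rw [hfn] at h1
    exact h1.2 heN
  set e₂ : Mbar := ↑e₂P with he₂
  have he₂Pset : e₂ ∈ Pset p Mbar := (mem_psub_iff p hrel).1 e₂P.2
  set args2 : (Fin 1 ⊕ (Fin n ⊕ Fin k)) → Mbar :=
    Sum.elim (fun _ => e₂) (Sum.elim cP d) with hargs2
  have hvalargs2 : (Subtype.val ∘ args2P) = args2 := by
    funext z
    rcases z with x1 | (i | i)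
    · rfl
    · rfl
    · exact hdhval i
  have hqfM2 : ψqf.Realize (args2 ∘ ⇑EΩ.symm) := by
    rw [hψ₂, Formula.realize_relabel] at hup1
    have h1 := realize_of_isQF_formula ((Psub p hrel Mbar).subtype) hψqf (args2P ∘ ⇑EΩ.symm)
    have hfn : (⇑(Psub p hrel Mbar).subtype ∘ (args2P ∘ ⇑EΩ.symm)) = args2 ∘ ⇑EΩ.symm := by
      rw [Substructure.coe_subtype, ← Function.comp_assoc, hvalargs2]
    rw [hfn] at h1
    exact h1.2 hup1
  have hΩM2 : Ω.Realize args2 := by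
    have h1 := (hψequiv Mbar hMbar (args2 ∘ ⇑EΩ.symm)).2 hqfM2
    rw [Formula.realize_relabel] at h1
    have hfn : ((args2 ∘ ⇑EΩ.symm) ∘ ⇑EΩ) = args2 := by
      funext z
      simp
    rw [hfn] at h1
    exact h1
  rw [hΩ, Formula.realize_inf] at hΩM2
  obtain ⟨hPe₂, hχ2⟩ := hΩM2
  rw [hχ, realize_oldIExs] at hχ2
  obtain ⟨y₀, hy₀⟩ := hχ2
  rw [hcore2, Formula.realize_inf] at hy₀
  obtain ⟨hθy, hφy⟩ := hy₀
  have hθy' : θ.Realize (Sum.elim y₀ d) := by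
    rw [Formula.realize_relabel] at hθy
    have hfn : ((fun a0 => Sum.elim args2 y₀ (id a0)) ∘ rθ) = Sum.elim y₀ d := by
      funext z
      cases z <;> rfl
    rw [hfn] at hθy
    exact hθy
  have hφy' : φh.Realize (Sum.elim (fun _ : Fin 1 => e₂) (Sum.elim y₀ cP)) := by
    rw [Formula.realize_relabel] at hφy
    have hfn : ((fun a0 => Sum.elim args2 y₀ (id a0)) ∘ rφ)
        = Sum.elim (fun _ : Fin 1 => e₂) (Sum.elim y₀ cP) := by
      funext z
      rcases z with x1 | (i | i) <;> rfl
    rw [hfn] at hφy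
    exact hφy
  -- transfer from y₀ to bM using strong isolation
  set w : Fin (1 + n) → Mbar :=
    fun t => Sum.elim (fun _ : Fin 1 => e₂) cP (finSumFinEquiv.symm t) with hw
  have hwP : ∀ t, w t ∈ Pset p Mbar := by
    intro t
    have hwt : w t = Sum.elim (fun _ : Fin 1 => e₂) cP (finSumFinEquiv.symm t) := rfl
    rw [hwt]
    rcases finSumFinEquiv.symm t with x1 | i
    · exact he₂Pset
    · exact hcPP i
  set rB : (Fin 1 ⊕ (Fin n ⊕ Fin n)) → (Fin n ⊕ Fin (1 + n)) :=
    Sum.elim (fun x1 => Sum.inr (finSumFinEquiv (Sum.inl x1)))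
      (Sum.elim (fun i => Sum.inl i) (fun i => Sum.inr (finSumFinEquiv (Sum.inr i)))) with hrB
  set ψB : L.Formula (Fin n ⊕ Fin (1 + n)) := Formula.relabel rB φh with hψB
  have hψBreal : ∀ y : Fin n → Mbar, ψB.Realize (Sum.elim y w) ↔
      φh.Realize (Sum.elim (fun _ : Fin 1 => e₂) (Sum.elim y cP)) := by
    intro y
    rw [hψB, Formula.realize_relabel]
    refine iff_of_eq (congrArg _ ?_)
    funext z
    rcases z with x1 | (i | i)
    · show w (finSumFinEquiv (Sum.inl x1)) = e₂
      simp only [hw, Equiv.symm_apply_apply, Sum.elim_inl]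
    · rfl
    · show w (finSumFinEquiv (Sum.inr i)) = cP i
      simp only [hw, Equiv.symm_apply_apply, Sum.elim_inr]
  have hφbM : φh.Realize (Sum.elim (fun _ : Fin 1 => e₂) (Sum.elim bM cP)) := by
    by_contra hcon
    have hnot : (ψB.not).Realize (Sum.elim bM w) := by
      rw [Formula.realize_not, hψBreal]
      exact hcon
    have h2 := STRISO (1 + n) ψB.not w hwP
      (by rw [show ⇑E ∘ b0 = bM from funext hEb]; exact hnot) y₀
      (by rw [show ⇑E ∘ d0 = d from funext (fun i => rfl)]; exact hθy')
    rw [Formula.realize_not, hψBreal] at h2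
    exact h2 hφy'
  -- conclude
  refine ⟨e₂, Or.inr ⟨↑(eN 0), (eN 0).2, rfl⟩, he₂Pset, ?_⟩
  have h1 := (hφhiff e₂ bM cP).1 hφbM
  have hfn2 : (fun i => if sel i then bM i else cP i) = c := funext hsplit
  rw [hfn2] at h1
  exact h1

end Main
/-- if T is relatively (ω,ω)-categorical, M is a model of T inside a
saturated model, and N₁ ≺ N₂ are models of T^P with N₁ = M^P, then M ∪ N₂ is complete. -/
theorem union_complete_of_relativelyCatCC
    {L : FirstOrder.Language.{u, v}} [Countable L.Symbols]
    (p : L.Relations 1) (hrel : Relational L)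
    (T : L.Theory) (hcomp : T.IsComplete) (hqe : HasQE T) (hinf : PInfinite p T)
    (hcat : RelativelyCatCC p hrel T)
    (Mbar : Type (max u v)) [L.Structure Mbar] (hMbar : Mbar ⊨ T)
    (hsat : IsSaturated (L := L) Mbar)
    (M : L.ElementarySubstructure Mbar)
    (N₁ N₂ : L.ElementarySubstructure (Psub p hrel Mbar))
    (h12 : (N₁ : Set (Psub p hrel Mbar)) ⊆ (N₂ : Set (Psub p hrel Mbar)))
    (hMP : (M : Set Mbar) ∩ Pset p Mbar =
      Subtype.val '' (N₁ : Set (Psub p hrel Mbar))) :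
    CompleteSet p Mbar
      ((M : Set Mbar) ∪ Subtype.val '' (N₂ : Set (Psub p hrel Mbar))) := by
  exact union_complete_main p hrel T hqe hinf hcat Mbar hMbar M N₁ N₂ h12 hMP

end RelCatPaper
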